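/- arXiv:1611.00682 — 7 statements merged into one kernel-verified Lean document; each statement's English description precedes it below -/
import Mathlib

section
/- If g ∈ P with Taylor expansion g(z) = 1 + Σ_{n≥1} p_n z^n and 1 ≤ k ≤ n−1, then for every w ∈ ℂ one has |p_n − w·p_k·p_{n−k}| ≤ 2·max{1, |1 − 2w|}. -/
set_option maxHeartbeats 2000000


open Metric

open Complex MeasureTheory intervalIntegral

noncomputable def Complex.abs : AbsoluteValue ℂ ℝ :=
  IsAbsoluteValue.toAbsoluteValue (norm : ℂ → ℝ)

lemma Complex.norm_eq_abs (z : ℂ) : ‖z‖ = Complex.abs z := rfl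

@[simp] lemma Complex.abs_ofReal (x : ℝ) : Complex.abs (x : ℂ) = |x| := Complex.norm_real x

@[simp] lemma Complex.abs_two : Complex.abs 2 = 2 := by
  rw [← Complex.norm_eq_abs]; simp

lemma Complex.sq_abs (z : ℂ) : Complex.abs z ^ 2 = Complex.normSq z := Complex.sq_norm z

lemma Complex.abs_exp_ofReal_mul_I (x : ℝ) : Complex.abs (Complex.exp (x * I)) = 1 :=
  Complex.norm_exp_ofReal_mul_I x

noncomputable def ee (m : ℤ) (θ : ℝ) : ℂ := Complex.exp ((m:ℂ) * θ * I)

lemma ee_mul (x y : ℤ) (θ : ℝ) : ee x θ * ee y θ = ee (x+y) θ := by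
  unfold ee
  rw [← Complex.exp_add]
  congr 1
  push_cast
  ring

lemma ee_zero (θ : ℝ) : ee 0 θ = 1 := by simp [ee]

lemma ee_cont (m : ℤ) : Continuous (ee m) := by
  unfold ee
  exact Complex.continuous_exp.comp (by fun_prop)

lemma ee_conj (m : ℤ) (θ : ℝ) : (starRingEnd ℂ) (ee m θ) = ee (-m) θ := by
  unfold ee
  rw [← Complex.exp_conj]
  congr 1
  simp [Complex.ext_iff]

noncomputable def rc (g : ℂ → ℂ) (r : ℝ) (θ : ℝ) : ℂ :=
  ((g ((r:ℂ) * Complex.exp ((θ:ℂ) * I))).re : ℂ)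

noncomputable def JJ (g : ℂ → ℂ) (r : ℝ) (m : ℤ) : ℂ :=
  ∫ θ in (0:ℝ)..(2*Real.pi), ee m θ * rc g r θ

lemma intExp (c : ℤ) : (∫ θ in (0:ℝ)..(2*Real.pi), Complex.exp ((c:ℂ) * θ * I)) =
    if c = 0 then (2*Real.pi : ℂ) else 0 := by
  rcases eq_or_ne c 0 with hc | hc
  · simp [hc]
  · rw [if_neg hc]
    have hc' : ((c:ℂ) * I) ≠ 0 := by
      simp [Complex.ext_iff, hc]
    have : ∀ θ : ℝ, (c:ℂ) * θ * I = ((c:ℂ)*I) * θ := fun θ => by ring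
    simp_rw [this]
    rw [integral_exp_mul_complex hc']
    have h1 : (c:ℂ) * I * ((2*Real.pi : ℝ) : ℂ) = c * (2 * Real.pi * I) := by push_cast; ring
    rw [h1, Complex.exp_int_mul_two_pi_mul_I]
    simp
lemma summable_aux (p : ℕ → ℂ) (hsum : ∀ z ∈ Metric.ball (0:ℂ) 1, Summable (fun j : ℕ => p j * z ^ j))
    (r : ℝ) (hr0 : 0 ≤ r) (hr1 : r < 1) : Summable (fun j : ℕ => Complex.abs (p j) * r ^ j) := by
  set r' : ℝ := (1+r)/2 with hr'
  have hrr' : r < r' := by rw [hr']; linarith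
  have hr'1 : r' < 1 := by rw [hr']; linarith
  have hr'0 : 0 < r' := by positivity
  have hs : Summable (fun j : ℕ => p j * (r' : ℂ) ^ j) := by
    apply hsum
    simp only [Metric.mem_ball, dist_zero_right, Complex.norm_real, Real.norm_eq_abs,
      abs_of_pos hr'0]
    exact hr'1
  have ht : Filter.Tendsto (fun j : ℕ => ‖p j * (r' : ℂ) ^ j‖) Filter.atTop (nhds 0) := by
    simpa using hs.tendsto_atTop_zero.norm
  obtain ⟨C, hC⟩ := ht.bddAbove_range
  have hC' : ∀ j : ℕ, Complex.abs (p j) * r' ^ j ≤ C := by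
    intro j
    have := hC (Set.mem_range_self j)
    exact (by simpa [abs_of_pos hr'0, mul_pow] using this : ‖p j‖ * r' ^ j ≤ C)
  have hC0 : 0 ≤ C := le_trans (by positivity) (hC' 0)
  refine Summable.of_nonneg_of_le (f := fun j => C * (r/r')^j) (fun j => by positivity) (fun j => ?_) ?_
  · 
    have h1 : Complex.abs (p j) * r ^ j = (Complex.abs (p j) * r' ^ j) * (r/r')^j := by
      have hne : r' ^ j ≠ 0 := pow_ne_zero _ hr'0.ne'
      rw [div_pow r r' j, mul_assoc, ← mul_div_assoc (r' ^ j), mul_div_cancel_left₀ _ hne]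
    rw [h1]
    apply mul_le_mul_of_nonneg_right (hC' j) (by positivity)
  · apply Summable.mul_left
    apply summable_geometric_of_lt_one (by positivity)
    rw [div_lt_one hr'0]; exact hrr'
lemma Eint (g : ℂ → ℂ) (p : ℕ → ℂ)
    (hsum : ∀ z ∈ ball (0 : ℂ) 1, HasSum (fun n : ℕ => p n * z ^ n) (g z))
    (r : ℝ) (hr0 : 0 < r) (hr1 : r < 1)
    (hsa : Summable (fun j : ℕ => Complex.abs (p j) * r ^ j)) (m : ℤ) :
    (∫ θ in (0:ℝ)..(2*Real.pi), g ((r:ℂ) * Complex.exp (θ * I)) * Complex.exp ((m:ℂ) * θ * I))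
      = if m ≤ 0 then (2*Real.pi : ℂ) * (p (-m).toNat * (r:ℂ) ^ (-m).toNat) else 0 := by
  set F : ℕ → ℝ → ℂ := fun j θ => p j * ((r:ℝ)^j : ℝ) * Complex.exp ((((j:ℤ)+m : ℤ):ℂ) * θ * I)
    with hF
  have hcirc : ∀ θ : ℝ, (r:ℂ) * Complex.exp (θ * I) ∈ ball (0:ℂ) 1 := by
    intro θ
    simp only [mem_ball, dist_zero_right, norm_mul, Complex.norm_real, Real.norm_eq_abs,
      abs_of_pos hr0]
    rw [show ((θ:ℂ) * I) = ((θ:ℝ):ℂ) * I by norm_num]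
    rw [Complex.norm_eq_abs, Complex.abs_exp_ofReal_mul_I]
    simpa using hr1
  have hterm : ∀ (j : ℕ) (θ : ℝ),
      p j * ((r:ℂ) * Complex.exp (θ*I))^j * Complex.exp ((m:ℂ)*θ*I) = F j θ := by
    intro j θ
    rw [hF]
    simp only
    rw [mul_pow, ← Complex.exp_nat_mul, show ((((j:ℤ)+m : ℤ):ℂ) * θ * I)
      = (j:ℂ)*(θ*I) + (m:ℂ)*θ*I by push_cast; ring, Complex.exp_add]
    push_cast
    ring
  have hps : ∀ θ : ℝ, HasSum (fun j : ℕ => F j θ)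
      (g ((r:ℂ) * Complex.exp (θ * I)) * Complex.exp ((m:ℂ)*θ*I)) := by
    intro θ
    have h := (hsum _ (hcirc θ)).mul_right (Complex.exp ((m:ℂ)*θ*I))
    exact h.congr_fun (fun j => (hterm j θ).symm)
  have hFcont : ∀ j : ℕ, Continuous (F j) := by
    intro j
    rw [hF]
    exact continuous_const.mul (Complex.continuous_exp.comp (by fun_prop))
  have hFnorm : ∀ (j : ℕ) (θ : ℝ), ‖F j θ‖ = Complex.abs (p j) * r ^ j := by
    intro j θ
    rw [hF]
    simp only [norm_mul]
    have h2 : ‖Complex.exp ((((j:ℤ)+m : ℤ):ℂ) * θ * I)‖ = 1 := by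
      rw [show ((((j:ℤ)+m : ℤ):ℂ) * θ * I) = (((((j:ℤ)+m : ℤ):ℝ) * θ : ℝ):ℂ) * I by
        push_cast; ring]
      rw [Complex.norm_eq_abs, Complex.abs_exp_ofReal_mul_I]
    rw [h2, mul_one]
    simp [Complex.norm_eq_abs, _root_.abs_of_nonneg hr0.le, _root_.abs_of_nonneg (pow_nonneg hr0.le j)]
  have hpi : (0:ℝ) ≤ 2 * Real.pi := by positivity
  have hInt : ∀ j : ℕ, Integrable (F j) (volume.restrict (Set.Ioc (0:ℝ) (2*Real.pi))) :=
    fun j => (hFcont j).integrableOn_Ioc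
  have hNormSum : Summable (fun j : ℕ => ∫ θ in Set.Ioc (0:ℝ) (2*Real.pi), ‖F j θ‖) := by
    have heq : ∀ j : ℕ, (∫ θ in Set.Ioc (0:ℝ) (2*Real.pi), ‖F j θ‖)
        = (2*Real.pi) * (Complex.abs (p j) * r ^ j) := by
      intro j
      simp_rw [hFnorm j]
      rw [setIntegral_const]
      simp [Real.volume_Ioc, ENNReal.toReal_ofReal hpi, Real.pi_pos.le]
    exact (hsa.mul_left (2*Real.pi)).congr (fun j => (heq j).symm)
  have hswap := MeasureTheory.integral_tsum_of_summable_integral_norm hInt hNormSum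
  have hterm_int : ∀ j : ℕ, (∫ θ in Set.Ioc (0:ℝ) (2*Real.pi), F j θ)
      = p j * (r:ℝ)^j * (if ((j:ℤ)+m : ℤ) = 0 then (2*Real.pi:ℂ) else 0) := by
    intro j
    rw [← intervalIntegral.integral_of_le hpi]
    rw [hF]
    simp only
    rw [intervalIntegral.integral_const_mul, intExp]
    push_cast
    ring
  rw [intervalIntegral.integral_of_le hpi]
  have hgint : (∫ θ in Set.Ioc (0:ℝ) (2*Real.pi),
      g ((r:ℂ) * Complex.exp (θ * I)) * Complex.exp ((m:ℂ) * θ * I))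
      = ∫ θ in Set.Ioc (0:ℝ) (2*Real.pi), (∑' j : ℕ, F j θ) := by
    apply setIntegral_congr_fun measurableSet_Ioc
    intro θ _
    exact ((hps θ).tsum_eq).symm
  rw [hgint, ← hswap]
  simp_rw [hterm_int]
  rcases le_or_gt m 0 with hm | hm
  · rw [if_pos hm]
    have hjm : ((((-m).toNat : ℕ) : ℤ) + m : ℤ) = 0 := by
      rw [Int.toNat_of_nonneg (by omega)]; ring
    rw [tsum_eq_single (-m).toNat]
    · rw [if_pos hjm]
      push_cast
      ring
    · intro j hj
      rw [if_neg, mul_zero]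
      intro hc
      apply hj
      omega
  · rw [if_neg (by omega)]
    have : ∀ j : ℕ, p j * (r:ℝ)^j * (if ((j:ℤ)+m : ℤ) = 0 then (2*Real.pi:ℂ) else 0) = 0 := by
      intro j
      rw [if_neg (by omega), mul_zero]
    simp_rw [this]
    exact tsum_zero

lemma intervalIntegral_re (a b : ℝ) (hab : a ≤ b) (f : ℝ → ℂ)
    (hf : IntervalIntegrable f volume a b) :
    (∫ x in a..b, f x).re = ∫ x in a..b, (f x).re := by
  rw [intervalIntegral.integral_of_le hab, intervalIntegral.integral_of_le hab]
  exact (_root_.integral_re hf.1).symm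

lemma gcirc_cont (g : ℂ → ℂ) (p : ℕ → ℂ)
    (hsum : ∀ z ∈ ball (0 : ℂ) 1, HasSum (fun n : ℕ => p n * z ^ n) (g z))
    (r : ℝ) (hr0 : 0 < r) (hr1 : r < 1)
    (hsa : Summable (fun j : ℕ => Complex.abs (p j) * r ^ j)) :
    Continuous (fun θ : ℝ => g ((r:ℂ) * Complex.exp ((θ:ℂ) * I))) := by
  have hcirc : ∀ θ : ℝ, (r:ℂ) * Complex.exp (θ * I) ∈ ball (0:ℂ) 1 := by
    intro θ
    simp only [mem_ball, dist_zero_right, norm_mul, Complex.norm_real, Real.norm_eq_abs,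
      _root_.abs_of_pos hr0]
    rw [Complex.norm_eq_abs, Complex.abs_exp_ofReal_mul_I]
    simpa using hr1
  have heq : (fun θ : ℝ => g ((r:ℂ) * Complex.exp ((θ:ℂ) * I)))
      = fun θ : ℝ => ∑' j : ℕ, p j * ((r:ℂ) * Complex.exp ((θ:ℂ) * I)) ^ j := by
    funext θ
    exact ((hsum _ (hcirc θ)).tsum_eq).symm
  rw [heq]
  apply continuous_tsum (u := fun j : ℕ => Complex.abs (p j) * r ^ j)
  · intro j
    fun_prop
  · exact hsa
  · intro j θ
    rw [norm_mul, norm_pow, norm_mul, Complex.norm_real, Real.norm_eq_abs,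
      _root_.abs_of_pos hr0, Complex.norm_eq_abs (Complex.exp _), Complex.abs_exp_ofReal_mul_I,
      mul_one]
    exact le_refl _

lemma rc_cont (g : ℂ → ℂ) (p : ℕ → ℂ)
    (hsum : ∀ z ∈ ball (0 : ℂ) 1, HasSum (fun n : ℕ => p n * z ^ n) (g z))
    (r : ℝ) (hr0 : 0 < r) (hr1 : r < 1)
    (hsa : Summable (fun j : ℕ => Complex.abs (p j) * r ^ j)) :
    Continuous (rc g r) := by
  unfold rc
  exact Complex.continuous_ofReal.comp
    (Complex.continuous_re.comp (gcirc_cont g p hsum r hr0 hr1 hsa))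

lemma JJ_eq (g : ℂ → ℂ) (p : ℕ → ℂ)
    (hsum : ∀ z ∈ ball (0 : ℂ) 1, HasSum (fun n : ℕ => p n * z ^ n) (g z))
    (r : ℝ) (hr0 : 0 < r) (hr1 : r < 1)
    (hsa : Summable (fun j : ℕ => Complex.abs (p j) * r ^ j)) (m : ℤ) :
    JJ g r m = ((if m ≤ 0 then (2*Real.pi:ℂ) * (p (-m).toNat * (r:ℂ)^(-m).toNat) else 0)
      + (starRingEnd ℂ) (if -m ≤ 0 then (2*Real.pi:ℂ) * (p m.toNat * (r:ℂ)^m.toNat) else 0))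
      / 2 := by
  have hpi : (0:ℝ) ≤ 2*Real.pi := by positivity
  have hgc := gcirc_cont g p hsum r hr0 hr1 hsa
  have h1 : ∀ θ : ℝ, ee m θ * rc g r θ =
      (g ((r:ℂ) * Complex.exp ((θ:ℂ)*I)) * ee m θ
        + (starRingEnd ℂ) (g ((r:ℂ) * Complex.exp ((θ:ℂ)*I)) * ee (-m) θ))/2 := by
    intro θ
    rw [map_mul, ee_conj, neg_neg, ← add_mul, Complex.add_conj]
    unfold rc
    push_cast
    ring
  unfold JJ
  simp_rw [h1]
  have hint1 : IntervalIntegrable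
      (fun θ : ℝ => g ((r:ℂ) * Complex.exp ((θ:ℂ)*I)) * ee m θ) volume 0 (2*Real.pi) :=
    (hgc.mul (ee_cont m)).intervalIntegrable _ _
  have hint2 : IntervalIntegrable
      (fun θ : ℝ => (starRingEnd ℂ) (g ((r:ℂ) * Complex.exp ((θ:ℂ)*I)) * ee (-m) θ))
      volume 0 (2*Real.pi) :=
    (Complex.continuous_conj.comp (hgc.mul (ee_cont (-m)))).intervalIntegrable _ _
  rw [intervalIntegral.integral_div, intervalIntegral.integral_add hint1 hint2]
  have h2 : (∫ θ in (0:ℝ)..(2*Real.pi),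
      (starRingEnd ℂ) (g ((r:ℂ) * Complex.exp ((θ:ℂ)*I)) * ee (-m) θ))
      = (starRingEnd ℂ) (∫ θ in (0:ℝ)..(2*Real.pi),
          g ((r:ℂ) * Complex.exp ((θ:ℂ)*I)) * ee (-m) θ) := by
    rw [intervalIntegral.integral_of_le hpi, intervalIntegral.integral_of_le hpi]
    exact _root_.integral_conj
  rw [h2]
  have hE := Eint g p hsum r hr0 hr1 hsa
  have hEm := hE m
  have hEnm := hE (-m)
  unfold ee
  rw [show ((-m : ℤ):ℂ) = -(m:ℂ) by push_cast; ring] at hEnm ⊢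
  rw [hEm, hEnm, neg_neg]

lemma JJ_zero (g : ℂ → ℂ) (p : ℕ → ℂ) (hp0 : p 0 = 1)
    (hsum : ∀ z ∈ ball (0 : ℂ) 1, HasSum (fun n : ℕ => p n * z ^ n) (g z))
    (r : ℝ) (hr0 : 0 < r) (hr1 : r < 1)
    (hsa : Summable (fun j : ℕ => Complex.abs (p j) * r ^ j)) :
    JJ g r 0 = (2*Real.pi : ℂ) := by
  rw [JJ_eq g p hsum r hr0 hr1 hsa 0]
  simp [hp0, Complex.conj_ofReal, map_ofNat]

lemma JJ_neg (g : ℂ → ℂ) (p : ℕ → ℂ)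
    (hsum : ∀ z ∈ ball (0 : ℂ) 1, HasSum (fun n : ℕ => p n * z ^ n) (g z))
    (r : ℝ) (hr0 : 0 < r) (hr1 : r < 1)
    (hsa : Summable (fun j : ℕ => Complex.abs (p j) * r ^ j)) (m : ℕ) (hm : 1 ≤ m) :
    JJ g r (-(m:ℤ)) = (Real.pi : ℂ) * (p m * (r:ℂ)^m) := by
  rw [JJ_eq g p hsum r hr0 hr1 hsa (-(m:ℤ))]
  rw [if_pos (by omega : -(m:ℤ) ≤ 0), if_neg (by omega : ¬ (-(-(m:ℤ)) ≤ 0))]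
  simp only [neg_neg, Int.toNat_natCast, map_zero, add_zero]
  push_cast
  ring

lemma JJ_pos (g : ℂ → ℂ) (p : ℕ → ℂ)
    (hsum : ∀ z ∈ ball (0 : ℂ) 1, HasSum (fun n : ℕ => p n * z ^ n) (g z))
    (r : ℝ) (hr0 : 0 < r) (hr1 : r < 1)
    (hsa : Summable (fun j : ℕ => Complex.abs (p j) * r ^ j)) (m : ℕ) (hm : 1 ≤ m) :
    JJ g r (m:ℤ) = (Real.pi : ℂ) * ((starRingEnd ℂ) (p m) * (r:ℂ)^m) := by
  rw [JJ_eq g p hsum r hr0 hr1 hsa (m:ℤ)]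
  rw [if_neg (by omega : ¬ ((m:ℤ) ≤ 0)), if_pos (by omega : -(m:ℤ) ≤ 0)]
  simp only [Int.toNat_natCast, map_mul, map_pow, zero_add, Complex.conj_ofReal, map_ofNat]
  ring

lemma quad (g : ℂ → ℂ) (p : ℕ → ℂ)
    (hsum : ∀ z ∈ ball (0 : ℂ) 1, HasSum (fun n : ℕ => p n * z ^ n) (g z))
    (r : ℝ) (hr0 : 0 < r) (hr1 : r < 1)
    (hsa : Summable (fun j : ℕ => Complex.abs (p j) * r ^ j))
    (x1 x2 x3 y1 y2 y3 : ℤ) (u1 u2 u3 v1 v2 v3 : ℂ) :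
    (∫ θ in (0:ℝ)..(2*Real.pi),
        (u1 * ee x1 θ + u2 * ee x2 θ + u3 * ee x3 θ)
        * (v1 * ee y1 θ + v2 * ee y2 θ + v3 * ee y3 θ) * rc g r θ)
    = u1*v1*JJ g r (x1+y1) + u1*v2*JJ g r (x1+y2) + u1*v3*JJ g r (x1+y3)
      + u2*v1*JJ g r (x2+y1) + u2*v2*JJ g r (x2+y2) + u2*v3*JJ g r (x2+y3)
      + u3*v1*JJ g r (x3+y1) + u3*v2*JJ g r (x3+y2) + u3*v3*JJ g r (x3+y3) := by
  have hrc := rc_cont g p hsum r hr0 hr1 hsa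
  have hI : ∀ (c : ℂ) (mm : ℤ),
      IntervalIntegrable (fun θ : ℝ => c * (ee mm θ * rc g r θ)) volume 0 (2*Real.pi) :=
    fun c mm => (continuous_const.mul ((ee_cont mm).mul hrc)).intervalIntegrable _ _
  have hsplit : (fun θ : ℝ =>
      (u1 * ee x1 θ + u2 * ee x2 θ + u3 * ee x3 θ)
      * (v1 * ee y1 θ + v2 * ee y2 θ + v3 * ee y3 θ) * rc g r θ)
      = fun θ : ℝ =>
        u1*v1 * (ee (x1+y1) θ * rc g r θ) + u1*v2 * (ee (x1+y2) θ * rc g r θ)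
        + u1*v3 * (ee (x1+y3) θ * rc g r θ)
        + u2*v1 * (ee (x2+y1) θ * rc g r θ) + u2*v2 * (ee (x2+y2) θ * rc g r θ)
        + u2*v3 * (ee (x2+y3) θ * rc g r θ)
        + u3*v1 * (ee (x3+y1) θ * rc g r θ) + u3*v2 * (ee (x3+y2) θ * rc g r θ)
        + u3*v3 * (ee (x3+y3) θ * rc g r θ) := by
    funext θ
    simp only [← ee_mul]
    ring
  rw [hsplit]
  have i1 := hI (u1*v1) (x1+y1)
  have i2 := hI (u1*v2) (x1+y2)
  have i3 := hI (u1*v3) (x1+y3)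
  have i4 := hI (u2*v1) (x2+y1)
  have i5 := hI (u2*v2) (x2+y2)
  have i6 := hI (u2*v3) (x2+y3)
  have i7 := hI (u3*v1) (x3+y1)
  have i8 := hI (u3*v2) (x3+y2)
  have i9 := hI (u3*v3) (x3+y3)
  have s2 := i1.add i2
  have s3 := s2.add i3
  have s4 := s3.add i4
  have s5 := s4.add i5
  have s6 := s5.add i6
  have s7 := s6.add i7
  have s8 := s7.add i8
  rw [intervalIntegral.integral_add s8 i9, intervalIntegral.integral_add s7 i8,
    intervalIntegral.integral_add s6 i7, intervalIntegral.integral_add s5 i6,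
    intervalIntegral.integral_add s4 i5, intervalIntegral.integral_add s3 i4,
    intervalIntegral.integral_add s2 i3, intervalIntegral.integral_add i1 i2]
  simp_rw [intervalIntegral.integral_const_mul]
  rfl

lemma circ_mem (r : ℝ) (hr0 : 0 < r) (hr1 : r < 1) (θ : ℝ) :
    (r:ℂ) * Complex.exp ((θ:ℂ) * I) ∈ ball (0:ℂ) 1 := by
  simp only [mem_ball, dist_zero_right, norm_mul, Complex.norm_real, Real.norm_eq_abs,
    _root_.abs_of_pos hr0]
  rw [Complex.norm_eq_abs, Complex.abs_exp_ofReal_mul_I]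
  simpa using hr1

lemma stepr (g : ℂ → ℂ) (p : ℕ → ℂ) (hp0 : p 0 = 1)
    (hsum : ∀ z ∈ ball (0 : ℂ) 1, HasSum (fun n : ℕ => p n * z ^ n) (g z))
    (hre : ∀ z ∈ ball (0 : ℂ) 1, 0 < (g z).re)
    (k l : ℕ) (hk : 1 ≤ k) (hl : 1 ≤ l) (r : ℝ) (hr0 : 0 < r) (hr1 : r < 1) :
    Complex.abs (p (k+l) * (r:ℂ)^(k+l) - p k * p l * (r:ℂ)^(k+l) / 2)
      ≤ 2 - Complex.abs (p k) * Complex.abs (p l) * r^(k+l) / 2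
    ∧ Complex.abs (p k) * r^k ≤ 2 ∧ Complex.abs (p l) * r^l ≤ 2 := by
  have hsa := summable_aux p (fun z hz => (hsum z hz).summable) r hr0.le hr1
  have hpi : (0:ℝ) ≤ 2*Real.pi := by positivity
  have hpipos := Real.pi_pos
  have habs2 : ∀ z : ℂ, ((Complex.abs z : ℝ):ℂ)^2 = z * (starRingEnd ℂ) z := by
    intro z
    rw [← Complex.ofReal_pow, Complex.sq_abs, Complex.mul_conj]
  set a : ℂ := p k * (r:ℂ)^k / 2 with ha
  set b : ℂ := p l * (r:ℂ)^l / 2 with hb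
  set C : ℂ := (Real.pi:ℂ) * (p (k+l) * (r:ℂ)^(k+l) - 2*a*b) with hC
  set A : ℝ := 2*Real.pi*(1 - (Complex.abs a)^2) with hA
  set B : ℝ := 2*Real.pi*(1 - (Complex.abs b)^2) with hB
  have key : ∀ s : ℂ, 0 ≤ A + (Complex.abs s)^2*B - 2*((starRingEnd ℂ) s * C).re := by
    intro s
    have hquad := quad g p hsum r hr0 hr1 hsa (-(k:ℤ)) (l:ℤ) 0 (k:ℤ) (-(l:ℤ)) 0
      1 (-s) (s * (starRingEnd ℂ) b - a) 1 (-(starRingEnd ℂ) s)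
      ((starRingEnd ℂ) s * b - (starRingEnd ℂ) a)
    rw [show (-(k:ℤ) + k) = 0 by ring, show (-(k:ℤ) + -(l:ℤ)) = -((k+l : ℕ):ℤ) by push_cast; ring,
      show (-(k:ℤ) + 0) = -(k:ℤ) by ring, show ((l:ℤ) + k) = ((k+l:ℕ):ℤ) by push_cast; ring,
      show ((l:ℤ) + -(l:ℤ)) = 0 by ring, show ((l:ℤ) + 0) = (l:ℤ) by ring,
      show ((0:ℤ) + k) = (k:ℤ) by ring, show ((0:ℤ) + -(l:ℤ)) = -(l:ℤ) by ring,
      show ((0:ℤ) + 0) = (0:ℤ) by ring] at hquad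
    rw [JJ_zero g p hp0 hsum r hr0 hr1 hsa, JJ_neg g p hsum r hr0 hr1 hsa (k+l) (by omega),
      JJ_neg g p hsum r hr0 hr1 hsa k hk, JJ_neg g p hsum r hr0 hr1 hsa l hl,
      JJ_pos g p hsum r hr0 hr1 hsa (k+l) (by omega), JJ_pos g p hsum r hr0 hr1 hsa k hk,
      JJ_pos g p hsum r hr0 hr1 hsa l hl] at hquad
    have hrkl : (r:ℂ)^(k+l) = (r:ℂ)^k * (r:ℂ)^l := pow_add _ _ _
    have hSval : (∫ θ in (0:ℝ)..(2*Real.pi),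
        (1 * ee (-(k:ℤ)) θ + (-s) * ee (l:ℤ) θ + (s * (starRingEnd ℂ) b - a) * ee 0 θ)
        * (1 * ee (k:ℤ) θ + (-(starRingEnd ℂ) s) * ee (-(l:ℤ)) θ
            + ((starRingEnd ℂ) s * b - (starRingEnd ℂ) a) * ee 0 θ) * rc g r θ)
        = ((A + (Complex.abs s)^2*B : ℝ) : ℂ)
          - ((starRingEnd ℂ) s * C + (starRingEnd ℂ) ((starRingEnd ℂ) s * C)) := by
      rw [hquad, hA, hB, hC]
      push_cast
      rw [habs2 s, habs2 a, habs2 b, ha, hb]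
      simp only [map_mul, map_sub, map_add, map_div₀, map_pow, map_one, map_ofNat,
        Complex.conj_conj, Complex.conj_ofReal]
      rw [hrkl]
      ring
    have hrc := rc_cont g p hsum r hr0 hr1 hsa
    have hΦc : Continuous (fun θ : ℝ =>
        1 * ee (-(k:ℤ)) θ + (-s) * ee (l:ℤ) θ + (s * (starRingEnd ℂ) b - a) * ee 0 θ) :=
      ((continuous_const.mul (ee_cont _)).add (continuous_const.mul (ee_cont _))).add
        (continuous_const.mul (ee_cont _))
    have hΨ : ∀ θ : ℝ, (1 * ee (k:ℤ) θ + (-(starRingEnd ℂ) s) * ee (-(l:ℤ)) θ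
        + ((starRingEnd ℂ) s * b - (starRingEnd ℂ) a) * ee 0 θ)
        = (starRingEnd ℂ) (1 * ee (-(k:ℤ)) θ + (-s) * ee (l:ℤ) θ
            + (s * (starRingEnd ℂ) b - a) * ee 0 θ) := by
      intro θ
      simp only [map_add, map_mul, map_sub, map_one, map_neg, ee_conj, Complex.conj_conj,
        neg_neg, neg_zero]
    have hnn : 0 ≤ (∫ θ in (0:ℝ)..(2*Real.pi),
        (1 * ee (-(k:ℤ)) θ + (-s) * ee (l:ℤ) θ + (s * (starRingEnd ℂ) b - a) * ee 0 θ)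
        * (1 * ee (k:ℤ) θ + (-(starRingEnd ℂ) s) * ee (-(l:ℤ)) θ
            + ((starRingEnd ℂ) s * b - (starRingEnd ℂ) a) * ee 0 θ) * rc g r θ).re := by
      have hcongr : (∫ θ in (0:ℝ)..(2*Real.pi),
          (1 * ee (-(k:ℤ)) θ + (-s) * ee (l:ℤ) θ + (s * (starRingEnd ℂ) b - a) * ee 0 θ)
          * (1 * ee (k:ℤ) θ + (-(starRingEnd ℂ) s) * ee (-(l:ℤ)) θ
              + ((starRingEnd ℂ) s * b - (starRingEnd ℂ) a) * ee 0 θ) * rc g r θ)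
          = ∫ θ in (0:ℝ)..(2*Real.pi),
          (1 * ee (-(k:ℤ)) θ + (-s) * ee (l:ℤ) θ + (s * (starRingEnd ℂ) b - a) * ee 0 θ)
          * (starRingEnd ℂ) (1 * ee (-(k:ℤ)) θ + (-s) * ee (l:ℤ) θ
              + (s * (starRingEnd ℂ) b - a) * ee 0 θ) * rc g r θ := by
        apply intervalIntegral.integral_congr
        intro θ _
        beta_reduce
        rw [hΨ θ]
      rw [hcongr]
      have hint : IntervalIntegrable (fun θ : ℝ =>
          (1 * ee (-(k:ℤ)) θ + (-s) * ee (l:ℤ) θ + (s * (starRingEnd ℂ) b - a) * ee 0 θ)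
          * (starRingEnd ℂ) (1 * ee (-(k:ℤ)) θ + (-s) * ee (l:ℤ) θ
              + (s * (starRingEnd ℂ) b - a) * ee 0 θ) * rc g r θ) volume 0 (2*Real.pi) :=
        ((hΦc.mul (Complex.continuous_conj.comp hΦc)).mul hrc).intervalIntegrable _ _
      rw [intervalIntegral_re _ _ hpi _ hint]
      apply intervalIntegral.integral_nonneg hpi
      intro θ _
      rw [Complex.mul_conj]
      have : (((Complex.normSq (1 * ee (-(k:ℤ)) θ + (-s) * ee (l:ℤ) θ
          + (s * (starRingEnd ℂ) b - a) * ee 0 θ) : ℝ) : ℂ) * rc g r θ).re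
          = Complex.normSq (1 * ee (-(k:ℤ)) θ + (-s) * ee (l:ℤ) θ
          + (s * (starRingEnd ℂ) b - a) * ee 0 θ)
            * (g ((r:ℂ) * Complex.exp ((θ:ℂ) * I))).re := by
        unfold rc
        rw [← Complex.ofReal_mul]
        exact Complex.ofReal_re _
      rw [this]
      exact mul_nonneg (Complex.normSq_nonneg _) (hre _ (circ_mem r hr0 hr1 θ)).le
    rw [hSval] at hnn
    have hre2 : ((((A + (Complex.abs s)^2*B : ℝ) : ℂ)
        - ((starRingEnd ℂ) s * C + (starRingEnd ℂ) ((starRingEnd ℂ) s * C))).re)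
        = A + (Complex.abs s)^2*B - 2*((starRingEnd ℂ) s * C).re := by
      simp only [Complex.sub_re, Complex.add_re, Complex.ofReal_re, Complex.conj_re]
      ring
    rw [hre2] at hnn
    exact hnn
  have hCnn := Complex.abs.nonneg C
  have h_t : ∀ t : ℝ, 0 ≤ t → 0 ≤ A + t^2*B - 2*t*Complex.abs C := by
    intro t ht
    rcases eq_or_ne C 0 with hC0 | hC0
    · have := key (t:ℂ)
      simp only [hC0, mul_zero, Complex.zero_re, Complex.abs_ofReal,
        _root_.abs_of_nonneg ht, map_zero] at this ⊢
      linarith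
    · have hCpos : 0 < Complex.abs C := Complex.abs.pos hC0
      have hs := key ((t:ℂ) * C / (Complex.abs C : ℝ))
      have habss : Complex.abs ((t:ℂ) * C / ((Complex.abs C : ℝ):ℂ)) = t := by
        rw [map_div₀, map_mul, Complex.abs_ofReal, Complex.abs_ofReal,
          _root_.abs_of_nonneg ht, _root_.abs_of_nonneg hCnn]
        field_simp
      have hres : ((starRingEnd ℂ) ((t:ℂ) * C / ((Complex.abs C : ℝ):ℂ)) * C).re
          = t * Complex.abs C := by
        rw [map_div₀, map_mul, Complex.conj_ofReal, Complex.conj_ofReal]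
        rw [show ((t:ℂ) * (starRingEnd ℂ) C / ((Complex.abs C : ℝ):ℂ)) * C
          = (t:ℂ) * (C * (starRingEnd ℂ) C) / ((Complex.abs C : ℝ):ℂ) by ring]
        rw [Complex.mul_conj, ← Complex.sq_abs]
        rw [show ((t:ℂ) * (((Complex.abs C)^2 : ℝ):ℂ) / ((Complex.abs C : ℝ):ℂ))
          = (((t * (Complex.abs C)^2 / (Complex.abs C) : ℝ)):ℂ) by push_cast; ring]
        rw [Complex.ofReal_re]
        field_simp
      rw [habss, hres] at hs
      linarith
  have hA0 : 0 ≤ A := by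
    have := key 0
    simpa using this
  have hB0 : 0 ≤ B := by
    by_contra hBneg
    push_neg at hBneg
    set t := max 1 ((A+1)/(-B)) with hT
    have ht1 : 1 ≤ t := le_max_left _ _
    have ht2 : (A+1)/(-B) ≤ t := le_max_right _ _
    have hBpos : 0 < -B := by linarith
    have h2 : A + 1 ≤ t * (-B) := by
      rw [div_le_iff₀ hBpos] at ht2
      linarith
    have h3 := h_t t (by linarith)
    nlinarith [mul_nonneg (mul_nonneg (sub_nonneg.2 ht1) (by linarith : (0:ℝ) ≤ t)) hBpos.le,
      mul_nonneg (by linarith : (0:ℝ) ≤ t) hCnn]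
  have hCS : (Complex.abs C)^2 ≤ A * B := by
    rcases eq_or_lt_of_le hB0 with hB0' | hBpos
    · have hC0 : Complex.abs C = 0 := by
        by_contra hC0
        have hCpos : 0 < Complex.abs C := lt_of_le_of_ne hCnn (Ne.symm hC0)
        have h4 := h_t ((A+1)/(2*Complex.abs C)) (by positivity)
        rw [← hB0'] at h4
        have h5 : 2 * ((A+1)/(2*Complex.abs C)) * Complex.abs C = A + 1 := by
          field_simp
        nlinarith
      rw [hC0, ← hB0']
      norm_num
    · have h4 := h_t (Complex.abs C / B) (by positivity)
      have hBne : B ≠ 0 := ne_of_gt hBpos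
      have h5 : Complex.abs C^2 / B ≤ A := by
        have e1 : A + (Complex.abs C / B)^2*B - 2*(Complex.abs C / B)*Complex.abs C
            = A - Complex.abs C^2 / B := by
          field_simp
          ring
        rw [e1] at h4
        linarith
      rw [div_le_iff₀ hBpos] at h5
      linarith
  have ha2 : (Complex.abs a)^2 ≤ 1 := by
    by_contra h
    push_neg at h
    have : A < 0 := by rw [hA]; nlinarith [hpipos]
    linarith
  have hb2 : (Complex.abs b)^2 ≤ 1 := by
    by_contra h
    push_neg at h
    have : B < 0 := by rw [hB]; nlinarith [hpipos]
    linarith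
  have hα : Complex.abs a ≤ 1 := by nlinarith [sq_nonneg (Complex.abs a - 1)]
  have hβ : Complex.abs b ≤ 1 := by nlinarith [sq_nonneg (Complex.abs b - 1)]
  have hαβ : Complex.abs a * Complex.abs b ≤ 1 := by
    nlinarith [Complex.abs.nonneg a, Complex.abs.nonneg b]
  have hfin : Complex.abs C ≤ 2*Real.pi*(1 - Complex.abs a * Complex.abs b) := by
    rw [hA, hB] at hCS
    have h6 : (Complex.abs C)^2 ≤ (2*Real.pi*(1 - Complex.abs a * Complex.abs b))^2 := by
      nlinarith [sq_nonneg (Complex.abs a - Complex.abs b), mul_pos hpipos hpipos]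
    have hD : 0 ≤ 2*Real.pi*(1 - Complex.abs a * Complex.abs b) := by nlinarith [hpipos]
    nlinarith [h6, hCnn, hD, sq_nonneg (Complex.abs C - 2*Real.pi*(1 - Complex.abs a * Complex.abs b)), sq_nonneg (Complex.abs C + 2*Real.pi*(1 - Complex.abs a * Complex.abs b))]
  -- unpack
  have habsa : Complex.abs a = Complex.abs (p k) * r^k / 2 := by
    rw [ha]
    rw [map_div₀, map_mul, map_pow, Complex.abs_ofReal, _root_.abs_of_nonneg hr0.le]
    simp
  have habsb : Complex.abs b = Complex.abs (p l) * r^l / 2 := by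
    rw [hb]
    rw [map_div₀, map_mul, map_pow, Complex.abs_ofReal, _root_.abs_of_nonneg hr0.le]
    simp
  have habsC : Complex.abs C
      = Real.pi * Complex.abs (p (k+l) * (r:ℂ)^(k+l) - p k * p l * (r:ℂ)^(k+l) / 2) := by
    rw [hC, map_mul, Complex.abs_ofReal, _root_.abs_of_nonneg hpipos.le]
    congr 2
    rw [ha, hb, pow_add]
    ring
  refine ⟨?_, ?_, ?_⟩
  · rw [habsC] at hfin
    rw [habsa, habsb] at hfin
    have hrkl2 : (r:ℝ)^(k+l) = r^k * r^l := pow_add _ _ _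
    rw [hrkl2]
    nlinarith
  · have := hα
    rw [habsa] at this
    linarith
  · have := hβ
    rw [habsb] at this
    linarith

lemma step1 (g : ℂ → ℂ) (p : ℕ → ℂ) (hp0 : p 0 = 1)
    (hsum : ∀ z ∈ ball (0 : ℂ) 1, HasSum (fun n : ℕ => p n * z ^ n) (g z))
    (hre : ∀ z ∈ ball (0 : ℂ) 1, 0 < (g z).re)
    (k l : ℕ) (hk : 1 ≤ k) (hl : 1 ≤ l) :
    Complex.abs (p (k+l) - p k * p l / 2)
      ≤ 2 - Complex.abs (p k) * Complex.abs (p l) / 2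
    ∧ Complex.abs (p k) ≤ 2 ∧ Complex.abs (p l) ≤ 2 := by
  have hmem : Set.Ioo (0:ℝ) 1 ∈ nhdsWithin (1:ℝ) (Set.Iio 1) :=
    Ioo_mem_nhdsLT_of_mem (by constructor <;> norm_num)
  set X := Complex.abs (p (k+l) - p k * p l / 2) with hX
  set Y := Complex.abs (p k) * Complex.abs (p l) with hY
  refine ⟨?_, ?_, ?_⟩
  · have hev : ∀ᶠ r in nhdsWithin (1:ℝ) (Set.Iio 1), (X + Y/2) * r^(k+l) ≤ 2 := by
      filter_upwards [hmem] with r hr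
      obtain ⟨hr0, hr1⟩ := hr
      have hs := (stepr g p hp0 hsum hre k l hk hl r hr0 hr1).1
      have heq : Complex.abs (p (k+l) * (r:ℂ)^(k+l) - p k * p l * (r:ℂ)^(k+l) / 2)
          = X * r^(k+l) := by
        rw [hX, show (p (k+l) * (r:ℂ)^(k+l) - p k * p l * (r:ℂ)^(k+l) / 2)
          = (p (k+l) - p k * p l / 2) * (r:ℂ)^(k+l) by ring, map_mul, map_pow,
          Complex.abs_ofReal, _root_.abs_of_nonneg hr0.le]
      rw [heq] at hs
      nlinarith [pow_nonneg hr0.le (k+l)]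
    have htend : Filter.Tendsto (fun r : ℝ => (X + Y/2) * r^(k+l))
        (nhdsWithin (1:ℝ) (Set.Iio 1)) (nhds (X + Y/2)) := by
      have h0 : Filter.Tendsto (fun r : ℝ => (X + Y/2) * r^(k+l)) (nhds (1:ℝ))
          (nhds ((X + Y/2) * 1^(k+l))) :=
        (continuous_const.mul (continuous_pow (k+l))).tendsto (1:ℝ)
      simpa using h0.mono_left (nhdsWithin_le_nhds : nhdsWithin (1:ℝ) (Set.Iio 1) ≤ nhds 1)
    have := le_of_tendsto htend hev
    linarith
  · have hev : ∀ᶠ r in nhdsWithin (1:ℝ) (Set.Iio 1), Complex.abs (p k) * r^k ≤ 2 := by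
      filter_upwards [hmem] with r hr
      exact (stepr g p hp0 hsum hre k l hk hl r hr.1 hr.2).2.1
    have htend : Filter.Tendsto (fun r : ℝ => Complex.abs (p k) * r^k)
        (nhdsWithin (1:ℝ) (Set.Iio 1)) (nhds (Complex.abs (p k))) := by
      have h0 : Filter.Tendsto (fun r : ℝ => Complex.abs (p k) * r^k) (nhds (1:ℝ))
          (nhds (Complex.abs (p k) * 1^k)) :=
        (continuous_const.mul (continuous_pow k)).tendsto (1:ℝ)
      simpa using h0.mono_left (nhdsWithin_le_nhds : nhdsWithin (1:ℝ) (Set.Iio 1) ≤ nhds 1)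
    exact le_of_tendsto htend hev
  · have hev : ∀ᶠ r in nhdsWithin (1:ℝ) (Set.Iio 1), Complex.abs (p l) * r^l ≤ 2 := by
      filter_upwards [hmem] with r hr
      exact (stepr g p hp0 hsum hre k l hk hl r hr.1 hr.2).2.2
    have htend : Filter.Tendsto (fun r : ℝ => Complex.abs (p l) * r^l)
        (nhdsWithin (1:ℝ) (Set.Iio 1)) (nhds (Complex.abs (p l))) := by
      have h0 : Filter.Tendsto (fun r : ℝ => Complex.abs (p l) * r^l) (nhds (1:ℝ))
          (nhds (Complex.abs (p l) * 1^l)) :=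
        (continuous_const.mul (continuous_pow l)).tendsto (1:ℝ)
      simpa using h0.mono_left (nhdsWithin_le_nhds : nhdsWithin (1:ℝ) (Set.Iio 1) ≤ nhds 1)
    exact le_of_tendsto htend hev


/-- Efraimidis' inequality: if `g` is in the Carathéodory class `P`
(analytic on the unit disk with `g(0) = 1` and `Re g > 0`, with Taylor
coefficients `p`), and `1 ≤ k ≤ n - 1`, then
`|p n - w * p k * p (n - k)| ≤ 2 * max 1 |1 - 2w|` for every `w : ℂ`. -/
theorem caratheodory_livingston_type (g : ℂ → ℂ) (p : ℕ → ℂ)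
    (hp0 : p 0 = 1)
    (hsum : ∀ z ∈ ball (0 : ℂ) 1, HasSum (fun n : ℕ => p n * z ^ n) (g z))
    (hre : ∀ z ∈ ball (0 : ℂ) 1, 0 < (g z).re)
    (n k : ℕ) (hk : 1 ≤ k) (hkn : k ≤ n - 1) :
    ∀ w : ℂ, ‖p n - w * p k * p (n - k)‖ ≤
      2 * max 1 ‖1 - 2 * w‖ := by

  intro w
  change Complex.abs (p n - w * p k * p (n - k)) ≤ 2 * max 1 (Complex.abs (1 - 2 * w))
  have hn1 : 1 ≤ n - k := by omega
  have hkl : k + (n - k) = n := by omega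
  obtain ⟨h1, h2, h3⟩ := step1 g p hp0 hsum hre k (n-k) hk hn1
  rw [hkl] at h1
  set M := max 1 (Complex.abs (1 - 2*w)) with hM
  have hM1 : 1 ≤ M := le_max_left _ _
  have hMw : Complex.abs (1-2*w) ≤ M := le_max_right _ _
  have hYnn : 0 ≤ Complex.abs (p k) * Complex.abs (p (n-k)) :=
    mul_nonneg (Complex.abs.nonneg _) (Complex.abs.nonneg _)
  have hY4 : Complex.abs (p k) * Complex.abs (p (n-k)) ≤ 4 := by
    nlinarith [Complex.abs.nonneg (p k), Complex.abs.nonneg (p (n-k))]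
  have htri : Complex.abs (p n - w * p k * p (n-k)) ≤
      Complex.abs (p n - p k * p (n-k)/2)
      + Complex.abs (1-2*w) * (Complex.abs (p k) * Complex.abs (p (n-k))) / 2 := by
    have hsplit : p n - w * p k * p (n-k)
        = (p n - p k * p (n-k)/2) + (1-2*w) * (p k * p (n-k))/2 := by ring
    rw [hsplit]
    refine (Complex.abs.add_le _ _).trans ?_
    rw [map_div₀, map_mul, map_mul, Complex.abs_two]
  have hstep : Complex.abs (1-2*w) * (Complex.abs (p k) * Complex.abs (p (n-k))) / 2
      ≤ M * (Complex.abs (p k) * Complex.abs (p (n-k))) / 2 := by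
    apply div_le_div_of_nonneg_right ?_ (by norm_num)
    exact mul_le_mul_of_nonneg_right hMw hYnn
  nlinarith [htri, h1, hstep, mul_le_mul_of_nonneg_left hY4 (by linarith : (0:ℝ) ≤ M - 1)]
end

section
/- If g ∈ P with Taylor expansion g(z) = 1 + Σ_{n≥1} p_n z^n and 1 ≤ k ≤ n−1, then |p_n − (1/2)·p_k·p_{n−k}| + (1/2)·|p_k·p_{n−k}| ≤ 2. -/
open Metric MeasureTheory intervalIntegral Filter
open scoped Real ComplexConjugate

private lemma iconj {f : ℝ → ℂ} {a b : ℝ} (h : a ≤ b) :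
    ∫ x in a..b, (starRingEnd ℂ) (f x) = (starRingEnd ℂ) (∫ x in a..b, f x) := by
  rw [intervalIntegral.integral_of_le h, intervalIntegral.integral_of_le h,
    integral_conj]

private lemma orth (m : ℤ) :
    ∫ θ in (0:ℝ)..(2*π), Complex.exp ((m:ℂ)*Complex.I*θ) = if m = 0 then ((2*π:ℝ):ℂ) else 0 := by
  rcases eq_or_ne m 0 with h | h
  · simp [h]
  · rw [if_neg h, integral_exp_mul_complex (by simp [Complex.I_ne_zero, h] : (m:ℂ)*Complex.I ≠ 0)]
    have h1 : (m:ℂ)*Complex.I*((2*π:ℝ):ℂ) = m * (2*π*Complex.I) := by push_cast; ring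
    rw [h1, Complex.exp_int_mul_two_pi_mul_I]
    simp

set_option maxHeartbeats 2000000 in
theorem key (g : ℂ → ℂ) (p : ℕ → ℂ) (hp0 : p 0 = 1)
    (hsum : ∀ z ∈ ball (0:ℂ) 1, HasSum (fun n : ℕ => p n * z ^ n) (g z))
    (hre : ∀ z ∈ ball (0:ℂ) 1, 0 < (g z).re)
    (n k : ℕ) (hk : 1 ≤ k) (hkn : k + 1 ≤ n) {r : ℝ} (hr0 : 0 < r) (hr1 : r < 1) :
    (‖p n - (1 / 2 : ℂ) * (p k * p (n - k))‖ +
      (1 / 2 : ℝ) * ‖p k * p (n - k)‖) * r ^ n ≤ 2 := by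
  -- summability at radius ρ ∈ (r,1)
  set ρ : ℝ := (1+r)/2 with hρdef
  have hρr : r < ρ := by rw [hρdef]; linarith
  have hρ0 : 0 < ρ := by rw [hρdef]; linarith
  have hρ1 : ρ < 1 := by rw [hρdef]; linarith
  have hmem : ((ρ:ℝ):ℂ) ∈ ball (0:ℂ) 1 := by
    rw [mem_ball_zero_iff]
    simpa [Complex.norm_real, abs_of_pos hρ0] using hρ1
  have hS : Summable (fun m : ℕ => p m * ((ρ:ℝ):ℂ) ^ m) := (hsum _ hmem).summable
  have hSn : Summable (fun m : ℕ => ‖p m‖ * ρ ^ m) := by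
    have := (summable_norm_iff.mpr hS)
    simpa [norm_mul, norm_pow, Complex.norm_real, abs_of_pos hρ0] using this
  set C : ℝ := ∑' m : ℕ, ‖p m‖ * ρ ^ m with hCdef
  have hC : ∀ m, ‖p m‖ * ρ ^ m ≤ C :=
    fun m => hSn.le_tsum m (fun j _ => by positivity)
  have hq1 : r / ρ < 1 := (div_lt_one hρ0).mpr hρr
  have hsr : Summable (fun m : ℕ => ‖p m‖ * r ^ m) := by
    refine Summable.of_nonneg_of_le (fun m => by positivity) (fun m => ?_)
      ((summable_geometric_of_lt_one (by positivity) hq1).mul_left C)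
    have h2 : (r/ρ) ^ m * ρ ^ m = r ^ m := by
      rw [← mul_pow, div_mul_cancel₀ _ (ne_of_gt hρ0)]
    have h1 : ‖p m‖ * r ^ m = (‖p m‖ * ρ ^ m) * (r/ρ) ^ m := by
      rw [mul_assoc, mul_comm (ρ ^ m), h2]
    rw [h1]
    exact mul_le_mul_of_nonneg_right (hC m) (by positivity)
  -- the boundary function
  set z : ℝ → ℂ := fun θ => (r:ℂ) * Complex.exp (Complex.I * θ) with hzdef
  have hzn : ∀ θ, ‖z θ‖ = r := by
    intro θ
    simp [hzdef, Complex.norm_exp, abs_of_pos hr0]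
  have hzb : ∀ θ, z θ ∈ ball (0:ℂ) 1 := fun θ => by
    rw [mem_ball_zero_iff, hzn]; exact hr1
  set G : ℝ → ℂ := fun θ => g (z θ) with hGdef
  have hGsum : ∀ θ, HasSum (fun m : ℕ => p m * (z θ) ^ m) (G θ) := fun θ => hsum _ (hzb θ)
  have htn : ∀ (m : ℕ) (θ : ℝ), ‖p m * (z θ) ^ m‖ = ‖p m‖ * r ^ m := by
    intro m θ; rw [norm_mul, norm_pow, hzn]
  have hGcont : Continuous G := by
    have hGeq : G = fun θ => ∑' m : ℕ, p m * (z θ) ^ m :=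
      funext fun θ => ((hGsum θ).tsum_eq).symm
    rw [hGeq]
    refine continuous_tsum (fun m => ?_) hsr (fun m θ => le_of_eq (htn m θ))
    simp only [hzdef]
    fun_prop
  -- exponentials
  set E : ℤ → ℝ → ℂ := fun m θ => Complex.exp ((m:ℂ) * Complex.I * θ) with hEdef
  have hEcont : ∀ m, Continuous (E m) := fun m => by
    simp only [hEdef]; fun_prop
  have hEnorm : ∀ m θ, ‖E m θ‖ = 1 := by
    intro m θ; simp [hEdef, Complex.norm_exp]
  have hEmul : ∀ a b θ, E a θ * E b θ = E (a+b) θ := by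
    intro a b θ; simp only [hEdef, ← Complex.exp_add]; congr 1; push_cast; ring
  have hE0 : ∀ θ, E 0 θ = 1 := by intro θ; simp [hEdef]
  have hEconj : ∀ m θ, conj (E m θ) = E (-m) θ := by
    intro m θ
    rw [hEdef, ← Complex.exp_conj]
    congr 1
    simp [Complex.conj_I]
  have hπ0 : (0:ℝ) < 2*π := by positivity
  set μ : Measure ℝ := volume.restrict (Set.Ioc 0 (2*π)) with hμdef
  haveI hμfin : IsFiniteMeasure μ := by
    constructor
    rw [hμdef, Measure.restrict_apply_univ, Real.volume_Ioc]
    exact ENNReal.ofReal_lt_top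
  have hIoc : ∀ f : ℝ → ℂ, (∫ θ in (0:ℝ)..(2*π), f θ) = ∫ θ, f θ ∂μ := fun f => by
    rw [intervalIntegral.integral_of_le hπ0.le, hμdef]
  have hIocR : ∀ f : ℝ → ℝ, (∫ θ in (0:ℝ)..(2*π), f θ) = ∫ θ, f θ ∂μ := fun f => by
    rw [intervalIntegral.integral_of_le hπ0.le, hμdef]
  -- Fourier coefficients of G
  set Q : ℤ → ℂ := fun m => if 0 ≤ m then ((2*π:ℝ):ℂ) * (p m.toNat * (r:ℂ) ^ m.toNat) else 0
    with hQdef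
  have hGF : ∀ m : ℤ, (∫ θ in (0:ℝ)..(2*π), G θ * E m θ) = Q (-m) := by
    intro m
    set F : ℕ → ℝ → ℂ := fun j θ => (p j * (z θ) ^ j) * E m θ with hFdef
    have hFcont : ∀ j, Continuous (F j) := fun j => by
      simp only [hFdef, hzdef]
      have := hEcont m
      fun_prop
    have hFint : ∀ j, Integrable (F j) μ := fun j => by
      rw [hμdef]; exact (hFcont j).integrableOn_Ioc
    have hFnint : ∀ j, (∫ θ, ‖F j θ‖ ∂μ) = (2*π) * (‖p j‖ * r ^ j) := by
      intro j
      have hptn : (fun θ => ‖F j θ‖) = fun _ => ‖p j‖ * r ^ j := by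
        funext θ
        rw [hFdef]
        simp only [norm_mul]
        rw [show ‖E m θ‖ = 1 from hEnorm m θ, mul_one, norm_pow, hzn]
      rw [hptn, MeasureTheory.integral_const]
      simp [hμdef, Real.volume_Ioc, ENNReal.toReal_ofReal hπ0.le, mul_comm, Real.pi_nonneg]
    have hFsum : Summable (fun j => ∫ θ, ‖F j θ‖ ∂μ) := by
      simp only [hFnint]
      exact hsr.mul_left _
    have hHS := MeasureTheory.hasSum_integral_of_summable_integral_norm hFint hFsum
    have hts : (fun θ => ∑' j : ℕ, F j θ) = fun θ => G θ * E m θ := by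
      funext θ
      rw [hFdef, tsum_mul_right, (hGsum θ).tsum_eq]
    rw [hts] at hHS
    have hFj : ∀ j : ℕ, (∫ θ, F j θ ∂μ) = if (j:ℤ) = -m then ((2*π:ℝ):ℂ) * (p j * (r:ℂ) ^ j) else 0 := by
      intro j
      have hpt : F j = fun θ => (p j * (r:ℂ) ^ j) * E ((j:ℤ)+m) θ := by
        funext θ
        simp only [hFdef]
        have hz2 : (z θ) ^ j = (r:ℂ) ^ j * E (j:ℤ) θ := by
          rw [hzdef, mul_pow, hEdef]
          congr 1
          rw [← Complex.exp_nat_mul]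
          congr 1
          push_cast
          ring
        rw [hz2, ← hEmul]
        ring
      rw [hpt]
      simp only []
      rw [MeasureTheory.integral_const_mul, ← hIoc]
      rw [show (∫ θ in (0:ℝ)..(2*π), E ((j:ℤ)+m) θ) = if (j:ℤ)+m = 0 then ((2*π:ℝ):ℂ) else 0 from by simp only [hEdef]; exact orth _]
      rcases eq_or_ne ((j:ℤ)+m) 0 with h | h
      · rw [if_pos h, if_pos (by omega)]
        ring
      · rw [if_neg h, if_neg (by omega), mul_zero]
    have hQs : HasSum (fun j : ℕ => ∫ θ, F j θ ∂μ) (Q (-m)) := by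
      simp only [hFj]
      rcases le_or_gt 0 (-m) with h | h
      · have hj0 : ((-m).toNat : ℤ) = -m := Int.toNat_of_nonneg h
        have : (fun j : ℕ => if (j:ℤ) = -m then ((2*π:ℝ):ℂ) * (p j * (r:ℂ) ^ j) else 0)
            = fun j : ℕ => if j = (-m).toNat then ((2*π:ℝ):ℂ) * (p (-m).toNat * (r:ℂ) ^ (-m).toNat) else 0 := by
          funext j
          rcases eq_or_ne j ((-m).toNat) with hj | hj
          · rw [if_pos (by omega), if_pos hj, hj]
          · rw [if_neg (by omega), if_neg hj]
        rw [this, hQdef]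
        simp only [if_pos h]
        exact hasSum_ite_eq _ _
      · have : (fun j : ℕ => if (j:ℤ) = -m then ((2*π:ℝ):ℂ) * (p j * (r:ℂ) ^ j) else 0)
            = fun _ : ℕ => (0:ℂ) := by
          funext j
          rw [if_neg (by omega)]
        rw [this, hQdef]
        simp only [if_neg (by omega : ¬ (0:ℤ) ≤ -m)]
        exact hasSum_zero
    rw [hIoc]
    exact hHS.unique hQs
  -- the weight and its moments
  set W : ℝ → ℝ := fun θ => (G θ).re with hWdef
  have hWpos : ∀ θ, 0 < W θ := fun θ => hre _ (hzb θ)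
  have hWcont : Continuous W := Complex.continuous_re.comp hGcont
  set T : ℤ → ℂ := fun m => ∫ θ in (0:ℝ)..(2*π), ((W θ:ℝ):ℂ) * E m θ with hTdef
  have hWc : ∀ θ, ((W θ:ℝ):ℂ) = (G θ + conj (G θ))/2 := by
    intro θ
    rw [hWdef, Complex.add_conj]
    push_cast
    ring
  have hT : ∀ m : ℤ, T m = (Q (-m) + conj (Q m))/2 := by
    intro m
    have h1 : ∀ θ, ((W θ:ℝ):ℂ) * E m θ = (G θ * E m θ)/2 + conj (G θ * E (-m) θ)/2 := by
      intro θ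
      rw [map_mul, hEconj, neg_neg, hWc]
      ring
    have hi1 : IntervalIntegrable (fun θ => (G θ * E m θ)/2) volume 0 (2*π) :=
      ((hGcont.mul (hEcont m)).div_const 2).intervalIntegrable _ _
    have hi2 : IntervalIntegrable (fun θ => conj (G θ * E (-m) θ)/2) volume 0 (2*π) :=
      (((Complex.continuous_conj.comp (hGcont.mul (hEcont (-m))))).div_const 2).intervalIntegrable _ _
    rw [hTdef]
    simp only []
    rw [intervalIntegral.integral_congr (g := fun θ => (G θ * E m θ)/2 + conj (G θ * E (-m) θ)/2)
      (fun θ _ => h1 θ)]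
    rw [intervalIntegral.integral_add hi1 hi2, intervalIntegral.integral_div,
      intervalIntegral.integral_div, iconj hπ0.le, hGF m, hGF (-m), neg_neg]
    ring
  have hQ0 : Q 0 = ((2*π:ℝ):ℂ) := by simp [hQdef, hp0]
  have hT0 : T 0 = ((2*π:ℝ):ℂ) := by
    rw [hT 0]
    simp only [neg_zero, hQ0, Complex.conj_ofReal]
    ring
  have hTneg : ∀ j : ℕ, 1 ≤ j → T (-(j:ℤ)) = ((π:ℝ):ℂ) * (p j * (r:ℂ)^j) := by
    intro j hj
    rw [hT, neg_neg]
    have h1 : Q (j:ℤ) = ((2*π:ℝ):ℂ) * (p j * (r:ℂ)^j) := by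
      simp [hQdef]
    have h2 : Q (-(j:ℤ)) = 0 := by
      rw [hQdef]
      simp only []
      rw [if_neg (by omega)]
    rw [h1, h2, map_zero]
    push_cast
    ring
  have hTpos : ∀ j : ℕ, 1 ≤ j → T (j:ℤ) = ((π:ℝ):ℂ) * conj (p j * (r:ℂ)^j) := by
    intro j hj
    rw [hT]
    have h1 : Q (j:ℤ) = ((2*π:ℝ):ℂ) * (p j * (r:ℂ)^j) := by
      simp [hQdef]
    have h2 : Q (-(j:ℤ)) = 0 := by
      rw [hQdef]
      simp only []
      rw [if_neg (by omega)]
    rw [h1, h2, map_mul, Complex.conj_ofReal]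
    push_cast
    ring
  -- setup x, y
  have hn1 : 1 ≤ n := by omega
  set nk : ℕ := n - k with hnkdef
  have hnk1 : 1 ≤ nk := by omega
  have hksum : k + nk = n := by omega
  set x : ℂ := (p k * (r:ℂ)^k)/2 with hxdef
  set y : ℂ := (p nk * (r:ℂ)^nk)/2 with hydef
  have hTk : T (-(k:ℤ)) = ((2*π:ℝ):ℂ) * x := by
    rw [hTneg k hk, hxdef]; push_cast; ring
  have hTnk : T (-(nk:ℤ)) = ((2*π:ℝ):ℂ) * y := by
    rw [hTneg nk hnk1, hydef]; push_cast; ring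
  have hTk' : T ((k:ℕ):ℤ) = ((2*π:ℝ):ℂ) * conj x := by
    rw [hTpos k hk, hxdef, map_div₀]
    push_cast
    rw [map_ofNat]
    ring
  have hTnk' : T ((nk:ℕ):ℤ) = ((2*π:ℝ):ℂ) * conj y := by
    rw [hTpos nk hnk1, hydef, map_div₀]
    push_cast
    rw [map_ofNat]
    ring
  -- size bounds on moments
  have hWint : (∫ θ in (0:ℝ)..(2*π), W θ) = 2*π := by
    have h1 : T 0 = ((∫ θ in (0:ℝ)..(2*π), W θ : ℝ):ℂ) := by
      rw [hTdef]
      simp only [hE0, mul_one]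
      exact intervalIntegral.integral_ofReal
    rw [hT0] at h1
    exact_mod_cast h1.symm
  have hTle : ∀ m : ℤ, ‖T m‖ ≤ 2*π := by
    intro m
    have h2 : ∀ θ, ‖((W θ:ℝ):ℂ) * E m θ‖ = W θ := fun θ => by
      rw [norm_mul, Complex.norm_real, Real.norm_eq_abs, abs_of_pos (hWpos θ),
        hEnorm m θ, mul_one]
    calc ‖T m‖ = ‖T m‖ := rfl
      _ ≤ ∫ θ in (0:ℝ)..(2*π), ‖((W θ:ℝ):ℂ) * E m θ‖ :=
          intervalIntegral.norm_integral_le_integral_norm hπ0.le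
      _ = ∫ θ in (0:ℝ)..(2*π), W θ := intervalIntegral.integral_congr fun θ _ => h2 θ
      _ = 2*π := hWint
  have hxle : ‖x‖ ≤ 1 := by
    have h1 := hTle (-(k:ℤ))
    rw [hTk, norm_mul, Complex.norm_real, Real.norm_eq_abs, abs_of_pos hπ0] at h1
    nlinarith [hπ0]
  have hyle : ‖y‖ ≤ 1 := by
    have h1 := hTle (-(nk:ℤ))
    rw [hTnk, norm_mul, Complex.norm_real, Real.norm_eq_abs, abs_of_pos hπ0] at h1
    nlinarith [hπ0]
  -- test functions
  set F : ℝ → ℂ := fun θ => E (-(k:ℤ)) θ - x with hFdef2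
  set H : ℝ → ℂ := fun θ => E (-(nk:ℤ)) θ - y with hHdef2
  have hFc : Continuous F := (hEcont _).sub continuous_const
  have hHc : Continuous H := (hEcont _).sub continuous_const
  have hFbd : ∀ θ, ‖F θ‖ ≤ 2 := fun θ => by
    calc ‖F θ‖ ≤ ‖E (-(k:ℤ)) θ‖ + ‖x‖ := by
          simp only [hFdef2]; exact norm_sub_le _ _
      _ ≤ 1 + 1 := by rw [hEnorm]; linarith [hxle]
      _ = 2 := by norm_num
  have hHbd : ∀ θ, ‖H θ‖ ≤ 2 := fun θ => by
    calc ‖H θ‖ ≤ ‖E (-(nk:ℤ)) θ‖ + ‖y‖ := by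
          simp only [hHdef2]; exact norm_sub_le _ _
      _ ≤ 1 + 1 := by rw [hEnorm]; linarith [hyle]
      _ = 2 := by norm_num
  have hWC : Continuous (fun θ => ((W θ:ℝ):ℂ)) := Complex.continuous_ofReal.comp hWcont
  have hint : ∀ m : ℤ, IntervalIntegrable (fun θ => ((W θ:ℝ):ℂ) * E m θ) volume 0 (2*π) :=
    fun m => (hWC.mul (hEcont m)).intervalIntegrable _ _
  have hintc : ∀ (m : ℤ) (c : ℂ),
      IntervalIntegrable (fun θ => (((W θ:ℝ):ℂ) * E m θ) * c) volume 0 (2*π) :=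
    fun m c => ((hWC.mul (hEcont m)).mul continuous_const).intervalIntegrable _ _
  -- the bilinear integral
  have hAint : (∫ θ in (0:ℝ)..(2*π), ((W θ:ℝ):ℂ) * (F θ * H θ))
      = ((π:ℝ):ℂ) * (p n * (r:ℂ)^n) - ((2*π:ℝ):ℂ) * (x*y) := by
    have hEn : ∀ θ, E (-(k:ℤ)) θ * E (-(nk:ℤ)) θ = E (-(n:ℤ)) θ := fun θ => by
      rw [hEmul]
      congr 2
      omega
    have hpt : ∀ θ, ((W θ:ℝ):ℂ) * (F θ * H θ)
        = (((W θ:ℝ):ℂ) * E (-(n:ℤ)) θ - (((W θ:ℝ):ℂ) * E (-(nk:ℤ)) θ) * x)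
          - ((((W θ:ℝ):ℂ) * E (-(k:ℤ)) θ) * y - (((W θ:ℝ):ℂ) * E 0 θ) * (x*y)) := by
      intro θ
      simp only [hFdef2, hHdef2]
      rw [← hEn θ, hE0]
      ring
    rw [intervalIntegral.integral_congr (fun θ _ => hpt θ)]
    rw [intervalIntegral.integral_sub ((hint _).sub (hintc _ _)) ((hintc _ _).sub (hintc _ _)),
      intervalIntegral.integral_sub (hint _) (hintc _ _),
      intervalIntegral.integral_sub (hintc _ _) (hintc _ _),
      intervalIntegral.integral_mul_const, intervalIntegral.integral_mul_const,
      intervalIntegral.integral_mul_const]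
    rw [show (∫ θ in (0:ℝ)..(2*π), ((W θ:ℝ):ℂ) * E (-(n:ℤ)) θ) = T (-(n:ℤ)) from rfl,
      show (∫ θ in (0:ℝ)..(2*π), ((W θ:ℝ):ℂ) * E (-(nk:ℤ)) θ) = T (-(nk:ℤ)) from rfl,
      show (∫ θ in (0:ℝ)..(2*π), ((W θ:ℝ):ℂ) * E (-(k:ℤ)) θ) = T (-(k:ℤ)) from rfl,
      show (∫ θ in (0:ℝ)..(2*π), ((W θ:ℝ):ℂ) * E 0 θ) = T 0 from rfl,
      hTneg n hn1, hTnk, hTk, hT0]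
    ring
  -- the quadratic integrals
  have hsq : ∀ (j : ℕ) (c : ℂ), T (-(j:ℤ)) = ((2*π:ℝ):ℂ) * c → T ((j:ℕ):ℤ) = ((2*π:ℝ):ℂ) * conj c →
      (∫ θ in (0:ℝ)..(2*π), W θ * ‖E (-(j:ℤ)) θ - c‖^2) = 2*π*(1 - ‖c‖^2) := by
    intro j c h1 h2
    have hpt : ∀ θ, ((W θ * ‖E (-(j:ℤ)) θ - c‖^2 : ℝ):ℂ)
        = ((((W θ:ℝ):ℂ) * E 0 θ) * (1 + c * conj c)
          - ((((W θ:ℝ):ℂ) * E (-(j:ℤ)) θ) * conj c + (((W θ:ℝ):ℂ) * E ((j:ℕ):ℤ) θ) * c)) := by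
      intro θ
      have h3 : E (-(j:ℤ)) θ * E ((j:ℕ):ℤ) θ = 1 := by
        rw [hEmul, show (-(j:ℤ) + (j:ℤ)) = 0 by omega]
        exact hE0 θ
      have h4 : ((‖E (-(j:ℤ)) θ - c‖^2 : ℝ):ℂ)
          = (E (-(j:ℤ)) θ - c) * conj (E (-(j:ℤ)) θ - c) := by
        rw [Complex.mul_conj, Complex.normSq_eq_norm_sq]
      rw [Complex.ofReal_mul, h4, map_sub, hEconj, neg_neg, hE0]
      linear_combination ((W θ:ℝ):ℂ) * h3
    have hC2 : (((∫ θ in (0:ℝ)..(2*π), W θ * ‖E (-(j:ℤ)) θ - c‖^2 : ℝ)):ℂ)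
        = (((2*π*(1 - ‖c‖^2) : ℝ)):ℂ) := by
      rw [← intervalIntegral.integral_ofReal]
      rw [intervalIntegral.integral_congr (fun θ _ => hpt θ)]
      rw [intervalIntegral.integral_sub (hintc 0 _) ((hintc _ _).add (hintc _ _)),
        intervalIntegral.integral_add (hintc _ _) (hintc _ _),
        intervalIntegral.integral_mul_const, intervalIntegral.integral_mul_const,
        intervalIntegral.integral_mul_const]
      rw [show (∫ θ in (0:ℝ)..(2*π), ((W θ:ℝ):ℂ) * E 0 θ) = T 0 from rfl,
        show (∫ θ in (0:ℝ)..(2*π), ((W θ:ℝ):ℂ) * E (-(j:ℤ)) θ) = T (-(j:ℤ)) from rfl,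
        show (∫ θ in (0:ℝ)..(2*π), ((W θ:ℝ):ℂ) * E ((j:ℕ):ℤ) θ) = T ((j:ℕ):ℤ) from rfl,
        hT0, h1, h2]
      have h5 : c * conj c = ((‖c‖:ℝ):ℂ)^2 := by
        rw [Complex.mul_conj, Complex.normSq_eq_norm_sq]
        push_cast
        ring
      push_cast
      linear_combination (-2*(π:ℂ)) * h5
    exact_mod_cast hC2
  -- Hölder / Cauchy-Schwarz
  set u : ℝ → ℝ := fun θ => Real.sqrt (W θ) * ‖F θ‖ with hudef
  set v : ℝ → ℝ := fun θ => Real.sqrt (W θ) * ‖H θ‖ with hvdef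
  have hucont : Continuous u := (hWcont.sqrt).mul (continuous_norm.comp hFc)
  have hvcont : Continuous v := (hWcont.sqrt).mul (continuous_norm.comp hHc)
  obtain ⟨θ0, _, hθ0'⟩ := isCompact_Icc.exists_isMaxOn (Set.nonempty_Icc.mpr hπ0.le)
    hWcont.continuousOn
  have hθ0 : ∀ θ ∈ Set.Icc (0:ℝ) (2*π), W θ ≤ W θ0 := fun θ hθ => hθ0' hθ
  have hbd : ∀ (q : ℝ → ℂ), Continuous q → (∀ θ, ‖q θ‖ ≤ 2) →
      MemLp (fun θ => Real.sqrt (W θ) * ‖q θ‖) (ENNReal.ofReal 2) μ := by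
    intro q hqc hq2
    refine MemLp.of_bound (((hWcont.sqrt).mul (continuous_norm.comp hqc)).aestronglyMeasurable)
      (Real.sqrt (W θ0) * 2) ?_
    rw [hμdef]
    refine (ae_restrict_iff' measurableSet_Ioc).mpr (Filter.Eventually.of_forall fun θ hθ => ?_)
    rw [Real.norm_eq_abs, abs_of_nonneg (by positivity)]
    have h1 : Real.sqrt (W θ) ≤ Real.sqrt (W θ0) :=
      Real.sqrt_le_sqrt (hθ0 θ (Set.Ioc_subset_Icc_self hθ))
    have h2 : (0:ℝ) ≤ Real.sqrt (W θ) := Real.sqrt_nonneg _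
    nlinarith [norm_nonneg (q θ), hq2 θ, Real.sqrt_nonneg (W θ0)]
  have humem : MemLp u (ENNReal.ofReal 2) μ := hbd F hFc hFbd
  have hvmem : MemLp v (ENNReal.ofReal 2) μ := hbd H hHc hHbd
  have hconj2 : Real.HolderConjugate 2 2 := Real.holderConjugate_iff.mpr ⟨one_lt_two, by norm_num⟩
  have hHolder := MeasureTheory.integral_mul_le_Lp_mul_Lq_of_nonneg (μ := μ) hconj2
    (Filter.Eventually.of_forall fun θ => by simp only [hudef]; positivity)
    (Filter.Eventually.of_forall fun θ => by simp only [hvdef]; positivity)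
    humem hvmem
  have hu2 : (∫ θ, u θ ^ (2:ℝ) ∂μ) = 2*π*(1 - ‖x‖^2) := by
    have hptu : (fun θ => u θ ^ (2:ℝ)) = fun θ => W θ * ‖E (-(k:ℤ)) θ - x‖^2 := by
      funext θ
      rw [hudef]
      simp only [hFdef2]
      rw [Real.rpow_two, mul_pow, Real.sq_sqrt (hWpos θ).le]
    rw [hptu, ← hIocR, hsq k x hTk hTk']
  have hv2 : (∫ θ, v θ ^ (2:ℝ) ∂μ) = 2*π*(1 - ‖y‖^2) := by
    have hptv : (fun θ => v θ ^ (2:ℝ)) = fun θ => W θ * ‖E (-(nk:ℤ)) θ - y‖^2 := by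
      funext θ
      rw [hvdef]
      simp only [hHdef2]
      rw [Real.rpow_two, mul_pow, Real.sq_sqrt (hWpos θ).le]
    rw [hptv, ← hIocR, hsq nk y hTnk hTnk']
  have hax := norm_nonneg x
  have hay := norm_nonneg y
  have h1x : (0:ℝ) ≤ 1 - ‖x‖^2 := by nlinarith [hxle]
  have h1y : (0:ℝ) ≤ 1 - ‖y‖^2 := by nlinarith [hyle]
  have hmain : ‖((π:ℝ):ℂ) * (p n * (r:ℂ)^n) - ((2*π:ℝ):ℂ) * (x*y)‖
      ≤ 2*π*(1 - ‖x‖ * ‖y‖) := by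
    have hnn : ‖∫ θ in (0:ℝ)..(2*π), ((W θ:ℝ):ℂ) * (F θ * H θ)‖
        ≤ ∫ θ in (0:ℝ)..(2*π), u θ * v θ := by
      refine le_trans (intervalIntegral.norm_integral_le_integral_norm hπ0.le) (le_of_eq ?_)
      refine intervalIntegral.integral_congr fun θ _ => ?_
      rw [norm_mul, norm_mul, Complex.norm_real, Real.norm_eq_abs, abs_of_pos (hWpos θ)]
      simp only [hudef, hvdef]
      rw [show Real.sqrt (W θ) * ‖F θ‖ * (Real.sqrt (W θ) * ‖H θ‖)
          = (Real.sqrt (W θ) * Real.sqrt (W θ)) * (‖F θ‖ * ‖H θ‖) by ring,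
        Real.mul_self_sqrt (hWpos θ).le]
    have h2 : (∫ θ in (0:ℝ)..(2*π), u θ * v θ)
        ≤ Real.sqrt (2*π*(1 - ‖x‖^2)) * Real.sqrt (2*π*(1 - ‖y‖^2)) := by
      rw [hIocR]
      refine le_trans hHolder (le_of_eq ?_)
      rw [hu2, hv2, ← Real.sqrt_eq_rpow, ← Real.sqrt_eq_rpow]
    have h3 : Real.sqrt (2*π*(1 - ‖x‖^2)) * Real.sqrt (2*π*(1 - ‖y‖^2))
        ≤ 2*π*(1 - ‖x‖ * ‖y‖) := by
      have hab : ‖x‖ * ‖y‖ ≤ 1 := by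
        calc ‖x‖ * ‖y‖ ≤ 1 * 1 := mul_le_mul hxle hyle hay (by norm_num)
          _ = 1 := by norm_num
      rw [← Real.sqrt_mul (by positivity)]
      refine le_trans (Real.sqrt_le_sqrt ?_) (le_of_eq (Real.sqrt_sq ?_))
      · nlinarith [hab, Real.pi_pos, mul_nonneg (mul_nonneg Real.pi_pos.le Real.pi_pos.le)
          (sq_nonneg (‖x‖ - ‖y‖))]
      · nlinarith [hab, Real.pi_pos]
    calc ‖((π:ℝ):ℂ) * (p n * (r:ℂ)^n) - ((2*π:ℝ):ℂ) * (x*y)‖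
        = ‖∫ θ in (0:ℝ)..(2*π), ((W θ:ℝ):ℂ) * (F θ * H θ)‖ := by
          rw [hAint]
      _ ≤ ∫ θ in (0:ℝ)..(2*π), u θ * v θ := hnn
      _ ≤ Real.sqrt (2*π*(1 - ‖x‖^2)) * Real.sqrt (2*π*(1 - ‖y‖^2)) := h2
      _ ≤ 2*π*(1 - ‖x‖ * ‖y‖) := h3
  -- final algebra
  have hrn : (r:ℂ)^k * (r:ℂ)^nk = (r:ℂ)^n := by
    rw [← pow_add, hksum]
  have habs1 : ‖((π:ℝ):ℂ) * (p n * (r:ℂ)^n) - ((2*π:ℝ):ℂ) * (x*y)‖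
      = π * (‖p n - (1/2:ℂ) * (p k * p nk)‖ * r^n) := by
    have he : ((π:ℝ):ℂ) * (p n * (r:ℂ)^n) - ((2*π:ℝ):ℂ) * (x*y)
        = ((π:ℝ):ℂ) * ((p n - (1/2:ℂ) * (p k * p nk)) * (r:ℂ)^n) := by
      rw [hxdef, hydef]
      push_cast
      linear_combination (-(((π:ℝ):ℂ) * p k * p nk)/2) * hrn
    rw [he, norm_mul, norm_mul, Complex.norm_real, Real.norm_eq_abs, abs_of_pos Real.pi_pos,
      norm_pow, Complex.norm_real, Real.norm_eq_abs, abs_of_pos hr0]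
  have habs2 : ‖x‖ * ‖y‖ = 1/4 * (‖p k * p nk‖ * r^n) := by
    rw [hxdef, hydef, norm_div, norm_div, norm_mul, norm_mul, norm_mul,
      norm_pow, norm_pow, Complex.norm_real, Real.norm_eq_abs, abs_of_pos hr0, Complex.norm_two]
    have hrr : r^k * r^nk = r^n := by rw [← pow_add, hksum]
    linear_combination (‖p k‖ * ‖p nk‖/4) * hrr
  have hfin := hmain
  rw [habs1, habs2] at hfin
  have hπ := Real.pi_pos
  have h6 : π * ((‖p n - (1/2:ℂ)*(p k * p nk)‖ +
      (1/2:ℝ)*‖p k * p nk‖) * r^n) ≤ π * 2 := by nlinarith [hfin]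
  have h7 := le_of_mul_le_mul_left h6 hπ
  linarith [h7]

/-- If `g` is in the Carathéodory class `P` (analytic on the unit disk with
`g(0) = 1` and `Re g > 0`, with Taylor coefficients `p`), and `1 ≤ k ≤ n - 1`,
then `|p n - (1/2) p k p (n-k)| + (1/2) |p k p (n-k)| ≤ 2`. -/
theorem caratheodory_half_inequality (g : ℂ → ℂ) (p : ℕ → ℂ)
    (hp0 : p 0 = 1)
    (hsum : ∀ z ∈ ball (0 : ℂ) 1, HasSum (fun n : ℕ => p n * z ^ n) (g z))
    (hre : ∀ z ∈ ball (0 : ℂ) 1, 0 < (g z).re)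
    (n k : ℕ) (hk : 1 ≤ k) (hkn : k ≤ n - 1) :
    ‖p n - (1 / 2 : ℂ) * (p k * p (n - k))‖ +
      (1 / 2 : ℝ) * ‖p k * p (n - k)‖ ≤ 2 := by
  have hkn' : k + 1 ≤ n := by omega
  set A : ℝ := ‖p n - (1 / 2 : ℂ) * (p k * p (n - k))‖ +
      (1 / 2 : ℝ) * ‖p k * p (n - k)‖ with hA
  have hkey : ∀ r : ℝ, 0 < r → r < 1 → A * r ^ n ≤ 2 := fun r h0 h1 =>
    key g p hp0 hsum hre n k hk hkn' h0 h1
  have htend : Tendsto (fun r : ℝ => A * r ^ n) (nhdsWithin 1 (Set.Iio 1)) (nhds A) := by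
    have hc : Continuous (fun r : ℝ => A * r ^ n) := by fun_prop
    have h := (hc.tendsto 1).mono_left (nhdsWithin_le_nhds (s := Set.Iio 1))
    simpa using h
  refine le_of_tendsto htend ?_
  filter_upwards [Ioo_mem_nhdsLT_of_mem
    (Set.mem_Ioc.mpr ⟨by norm_num, le_refl (1:ℝ)⟩ : (1:ℝ) ∈ Set.Ioc 0 1)] with r hr
  exact hkey r hr.1 hr.2
end

section
/- If f belongs to the Hurwitz class ℋ and n ≥ 2, then for every λ ∈ ℂ one has |λ·a_n² − a_{2n−1}| ≤ max{ |λ|/n² , 1/(2n−1) }. -/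
open Metric

/-- If `f` is in the Hurwitz class `ℋ` (analytic on the unit disk,
`f(z) = z + Σ_{n≥2} a_n z^n` with `Σ_{n≥2} n |a_n| ≤ 1`) and `n ≥ 2`, then
`|λ a_n² - a_{2n-1}| ≤ max (|λ|/n²) (1/(2n-1))` for every `λ : ℂ`. -/
theorem hurwitz_zalcman_equal_indices (f : ℂ → ℂ) (a : ℕ → ℂ)
    (ha0 : a 0 = 0) (ha1 : a 1 = 1)
    (hsum : ∀ z ∈ ball (0 : ℂ) 1, HasSum (fun n : ℕ => a n * z ^ n) (f z))
    (hs : Summable fun n : ℕ => ((n + 2 : ℕ) : ℝ) * ‖a (n + 2)‖)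
    (hH : ∑' n : ℕ, ((n + 2 : ℕ) : ℝ) * ‖a (n + 2)‖ ≤ 1)
    (n : ℕ) (hn : 2 ≤ n) :
    ∀ lam : ℂ, ‖lam * (a n) ^ 2 - a (2 * n - 1)‖ ≤
      max (‖lam‖ / (n : ℝ) ^ 2) (1 / ((2 * n - 1 : ℕ) : ℝ)) := by
  intro lam
  set x : ℝ := ‖a n‖ with hxdef
  set y : ℝ := ‖a (2 * n - 1)‖ with hydef
  set M : ℝ := max (‖lam‖ / (n : ℝ) ^ 2) (1 / ((2 * n - 1 : ℕ) : ℝ)) with hMdef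
  have hx : 0 ≤ x := norm_nonneg _
  have hy : 0 ≤ y := norm_nonneg _
  have hnpos : (0 : ℝ) < (n : ℝ) := by positivity
  have hcpos : (0 : ℝ) < ((2 * n - 1 : ℕ) : ℝ) := by
    have : 1 ≤ 2 * n - 1 := by omega
    exact_mod_cast Nat.lt_of_lt_of_le Nat.zero_lt_one this
  -- key coefficient bound
  have hkey : (n : ℝ) * x + ((2 * n - 1 : ℕ) : ℝ) * y ≤ 1 := by
    have hne : n - 2 ≠ 2 * n - 3 := by omega
    have e1 : n - 2 + 2 = n := by omega
    have e2 : 2 * n - 3 + 2 = 2 * n - 1 := by omega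
    calc (n : ℝ) * x + ((2 * n - 1 : ℕ) : ℝ) * y
        = ∑ k ∈ ({n - 2, 2 * n - 3} : Finset ℕ),
            ((k + 2 : ℕ) : ℝ) * ‖a (k + 2)‖ := by
          rw [Finset.sum_pair hne, e1, e2]
      _ ≤ ∑' k : ℕ, ((k + 2 : ℕ) : ℝ) * ‖a (k + 2)‖ :=
          Summable.sum_le_tsum _ (fun k _ => by positivity) hs
      _ ≤ 1 := hH
  have hnx : (n : ℝ) * x ≤ 1 := by nlinarith [mul_nonneg hcpos.le hy]
  have hM : 0 ≤ M := le_trans (by positivity) (le_max_right _ _)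
  have hM1 : ‖lam‖ ≤ M * (n : ℝ) ^ 2 := by
    have := le_max_left (‖lam‖ / (n : ℝ) ^ 2) (1 / ((2 * n - 1 : ℕ) : ℝ))
    rw [div_le_iff₀ (by positivity)] at this
    linarith [this]
  have hM2 : 1 ≤ M * ((2 * n - 1 : ℕ) : ℝ) := by
    have := le_max_right (‖lam‖ / (n : ℝ) ^ 2) (1 / ((2 * n - 1 : ℕ) : ℝ))
    rw [div_le_iff₀ hcpos] at this
    linarith [this]
  have habs : ‖lam * (a n) ^ 2 - a (2 * n - 1)‖ ≤ ‖lam‖ * x ^ 2 + y := by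
    calc ‖lam * (a n) ^ 2 - a (2 * n - 1)‖
        ≤ ‖lam * (a n) ^ 2‖ + ‖a (2 * n - 1)‖ :=
          norm_sub_le _ _
      _ = ‖lam‖ * x ^ 2 + y := by rw [norm_mul, norm_pow]
  refine habs.trans ?_
  have step1 : ‖lam‖ * x ^ 2 ≤ M * ((n : ℝ) * x) := by
    have h1 : ‖lam‖ * x ^ 2 ≤ M * (n : ℝ) ^ 2 * x ^ 2 :=
      mul_le_mul_of_nonneg_right hM1 (by positivity)
    have h2 : M * (n : ℝ) ^ 2 * x ^ 2 = M * ((n : ℝ) * x) ^ 2 := by ring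
    have h3 : ((n : ℝ) * x) ^ 2 ≤ (n : ℝ) * x := by
      nlinarith [mul_nonneg hnpos.le hx]
    nlinarith [mul_le_mul_of_nonneg_left h3 hM]
  have step2 : y ≤ M * (((2 * n - 1 : ℕ) : ℝ) * y) := by
    nlinarith [mul_le_mul_of_nonneg_right hM2 hy]
  calc ‖lam‖ * x ^ 2 + y
      ≤ M * ((n : ℝ) * x) + M * (((2 * n - 1 : ℕ) : ℝ) * y) := add_le_add step1 step2
    _ = M * ((n : ℝ) * x + ((2 * n - 1 : ℕ) : ℝ) * y) := by ring
    _ ≤ M * 1 := mul_le_mul_of_nonneg_left hkey hM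
    _ = M := mul_one M
end

section
/- If f belongs to the Hurwitz class ℋ and m, n ≥ 2 are distinct integers, then 4mn·|a_m·a_n| + (m+n−1)·|a_{m+n−1}| ≤ 1. -/
open Metric

/-- If `f` is in the Hurwitz class `ℋ` (analytic on the unit disk,
`f(z) = z + Σ_{n≥2} a_n z^n` with `Σ_{n≥2} n |a_n| ≤ 1`) and `m ≠ n`, `m, n ≥ 2`,
then `4mn |a_m a_n| + (m+n-1) |a_{m+n-1}| ≤ 1`. -/
theorem hurwitz_distinct_coeff_ineq (f : ℂ → ℂ) (a : ℕ → ℂ)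
    (ha0 : a 0 = 0) (ha1 : a 1 = 1)
    (hsum : ∀ z ∈ ball (0 : ℂ) 1, HasSum (fun n : ℕ => a n * z ^ n) (f z))
    (hs : Summable fun n : ℕ => ((n + 2 : ℕ) : ℝ) * ‖a (n + 2)‖)
    (hH : ∑' n : ℕ, ((n + 2 : ℕ) : ℝ) * ‖a (n + 2)‖ ≤ 1)
    (m n : ℕ) (hm : 2 ≤ m) (hn : 2 ≤ n) (hmn : m ≠ n) :
    (4 * m * n : ℝ) * ‖a m * a n‖ +
      ((m + n - 1 : ℕ) : ℝ) * ‖a (m + n - 1)‖ ≤ 1 := by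
  have key : ∑ k ∈ ({m - 2, n - 2, m + n - 3} : Finset ℕ),
      ((k + 2 : ℕ) : ℝ) * ‖a (k + 2)‖ ≤ 1 :=
    le_trans (Summable.sum_le_tsum _ (fun i _ => by positivity) hs) hH
  have hne1 : m - 2 ≠ n - 2 := by omega
  have hne2 : m - 2 ≠ m + n - 3 := by omega
  have hne3 : n - 2 ≠ m + n - 3 := by omega
  rw [Finset.sum_insert (by simp [hne1, hne2]),
      Finset.sum_insert (by simp [hne3]), Finset.sum_singleton] at key
  have e1 : m - 2 + 2 = m := by omega
  have e2 : n - 2 + 2 = n := by omega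
  have e3 : m + n - 3 + 2 = m + n - 1 := by omega
  rw [e1, e2, e3] at key
  set x := ((m : ℕ) : ℝ) * ‖a m‖ with hxdef
  set y := ((n : ℕ) : ℝ) * ‖a n‖ with hydef
  set z := ((m + n - 1 : ℕ) : ℝ) * ‖a (m + n - 1)‖ with hzdef
  have hx : 0 ≤ x := by positivity
  have hy : 0 ≤ y := by positivity
  have hz : 0 ≤ z := by positivity
  rw [norm_mul]
  have hab : (4 * m * n : ℝ) * (‖a m‖ * ‖a n‖) = 4 * x * y := by
    rw [hxdef, hydef]; ring
  rw [hab]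
  nlinarith [sq_nonneg (x - y), mul_nonneg (add_nonneg hx hy) (by linarith : (0:ℝ) ≤ 1 - (x + y))]
end

section
/- If f belongs to the Hurwitz class ℋ and m, n ≥ 2 are distinct integers, then for every λ ∈ ℂ one has |λ·a_m·a_n − a_{m+n−1}| ≤ max{ |λ|/(4mn) , 1/(m+n−1) }. -/
open Metric

lemma hurwitz_aux_real_ineq (L x y z M N p : ℝ) (hL : 0 ≤ L) (hx : 0 ≤ x)
    (hy : 0 ≤ y) (hz : 0 ≤ z) (hM : 2 ≤ M) (hN : 2 ≤ N) (hp : 3 ≤ p)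
    (key : M * x + N * y + p * z ≤ 1) :
    L * (x * y) + z ≤ max (L / (4 * M * N)) (1 / p) := by
  have hM0 : 0 < M := by linarith
  have hN0 : 0 < N := by linarith
  have hp0 : 0 < p := by linarith
  have h4mn : (0 : ℝ) < 4 * M * N := by positivity
  have hA : L / (4 * M * N) * (4 * M * N) = L := by field_simp
  have hB : 1 / p * p = 1 := by field_simp
  have hA0 : 0 ≤ L / (4 * M * N) := by positivity
  have hB0 : 0 < 1 / p := by positivity
  have hmx : 0 ≤ M * x := by positivity
  have hny : 0 ≤ N * y := by positivity
  have hw0 : 0 ≤ p * z := by positivity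
  have hw1 : p * z ≤ 1 := by nlinarith
  have hzBw : z = 1 / p * (p * z) := by field_simp
  have h4 : 4 * M * N * (x * y) ≤ (1 - p * z) ^ 2 := by
    nlinarith [sq_nonneg (M * x - N * y), mul_nonneg hmx hny]
  have step1 : L * (x * y) ≤ L / (4 * M * N) * (1 - p * z) ^ 2 := by
    have h := mul_le_mul_of_nonneg_left h4 hA0
    calc L * (x * y) = L / (4 * M * N) * (4 * M * N * (x * y)) := by
          field_simp
      _ ≤ L / (4 * M * N) * (1 - p * z) ^ 2 := h
  set A := L / (4 * M * N) with hAdef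
  set B := 1 / p with hBdef
  set w := p * z with hwdef
  have goal2 : A * (1 - w) ^ 2 + B * w ≤ max A B := by
    clear_value A B w
    rcases le_total A B with hAB | hAB
    · rw [max_eq_right hAB]
      nlinarith [mul_nonneg (sub_nonneg.2 hw1) (sub_nonneg.2 hAB),
        mul_nonneg hA0 (mul_nonneg hw0 (sub_nonneg.2 hw1))]
    · rw [max_eq_left hAB]
      nlinarith [mul_nonneg hw0 (sub_nonneg.2 hAB),
        mul_nonneg hA0 (mul_nonneg hw0 (sub_nonneg.2 hw1))]
  calc L * (x * y) + z = L * (x * y) + B * w := by rw [← hzBw]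
    _ ≤ A * (1 - w) ^ 2 + B * w := by linarith
    _ ≤ max A B := goal2

/-- If `f` is in the Hurwitz class `ℋ` (analytic on the unit disk,
`f(z) = z + Σ_{n≥2} a_n z^n` with `Σ_{n≥2} n |a_n| ≤ 1`) and `m ≠ n`, `m, n ≥ 2`,
then `|λ a_m a_n - a_{m+n-1}| ≤ max (|λ|/(4mn)) (1/(m+n-1))` for every `λ : ℂ`. -/
theorem hurwitz_zalcman_distinct_indices (f : ℂ → ℂ) (a : ℕ → ℂ)
    (ha0 : a 0 = 0) (ha1 : a 1 = 1)
    (hsum : ∀ z ∈ ball (0 : ℂ) 1, HasSum (fun n : ℕ => a n * z ^ n) (f z))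
    (hs : Summable fun n : ℕ => ((n + 2 : ℕ) : ℝ) * ‖a (n + 2)‖)
    (hH : ∑' n : ℕ, ((n + 2 : ℕ) : ℝ) * ‖a (n + 2)‖ ≤ 1)
    (m n : ℕ) (hm : 2 ≤ m) (hn : 2 ≤ n) (hmn : m ≠ n) :
    ∀ lam : ℂ, ‖lam * (a m * a n) - a (m + n - 1)‖ ≤
      max (‖lam‖ / (4 * m * n : ℝ)) (1 / ((m + n - 1 : ℕ) : ℝ)) := by
  intro lam
  -- the key coefficient bound
  have key : (m : ℝ) * ‖a m‖ + (n : ℝ) * ‖a n‖ +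
      ((m + n - 1 : ℕ) : ℝ) * ‖a (m + n - 1)‖ ≤ 1 := by
    have h1 : m - 2 ≠ n - 2 := by omega
    have h2 : m - 2 ≠ m + n - 3 := by omega
    have h3 : n - 2 ≠ m + n - 3 := by omega
    have hsub : ∑ k ∈ ({m - 2, n - 2, m + n - 3} : Finset ℕ),
        ((k + 2 : ℕ) : ℝ) * ‖a (k + 2)‖ ≤
        ∑' k : ℕ, ((k + 2 : ℕ) : ℝ) * ‖a (k + 2)‖ :=
      Summable.sum_le_tsum _ (fun i _ => by positivity) hs
    rw [Finset.sum_insert (by simp [h1, h2]), Finset.sum_insert (by simp [h3]),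
      Finset.sum_singleton] at hsub
    have e1 : m - 2 + 2 = m := by omega
    have e2 : n - 2 + 2 = n := by omega
    have e3 : m + n - 3 + 2 = m + n - 1 := by omega
    rw [e1, e2, e3] at hsub
    have := hsub.trans hH
    linarith
  -- triangle inequality
  have tri : ‖lam * (a m * a n) - a (m + n - 1)‖ ≤
      ‖lam‖ * (‖a m‖ * ‖a n‖) +
        ‖a (m + n - 1)‖ := by
    calc ‖lam * (a m * a n) - a (m + n - 1)‖
        ≤ ‖lam * (a m * a n)‖ + ‖a (m + n - 1)‖ := by
          simpa using norm_sub_le_norm_sub_add_norm_sub (lam * (a m * a n)) 0 (a (m + n - 1))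
      _ = _ := by rw [norm_mul, norm_mul]
  refine tri.trans ?_
  have hm' : (2 : ℝ) ≤ (m : ℝ) := by exact_mod_cast hm
  have hn' : (2 : ℝ) ≤ (n : ℝ) := by exact_mod_cast hn
  have hp' : (3 : ℝ) ≤ ((m + n - 1 : ℕ) : ℝ) := by
    have h3 : (3 : ℕ) ≤ m + n - 1 := by omega
    exact_mod_cast h3
  exact hurwitz_aux_real_ineq _ _ _ _ _ _ _ (norm_nonneg _)
    (norm_nonneg _) (norm_nonneg _) (norm_nonneg _)
    hm' hn' hp' key
end

section
/- If f belongs to the closed convex hull of the convex functions (i.e. f is analytic on 𝔻 with f(0) = 0, f'(0) = 1 and Re(f(z)/z) > 1/2 for all z ∈ 𝔻 with z ≠ 0) and m, n ≥ 2, then for every λ ∈ ℂ one has |λ·a_m·a_n − a_{m+n−1}| ≤ max{ 1 , |1 − λ| }. -/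
open Metric
open Real intervalIntegral MeasureTheory

noncomputable def Zal.E (j : ℤ) (θ : ℝ) : ℂ := Complex.exp (j * θ * Complex.I)

namespace Zal

lemma E_cont (j : ℤ) : Continuous (E j) := by
  unfold E; fun_prop

lemma E_norm (j : ℤ) (θ : ℝ) : ‖E j θ‖ = 1 := by
  simp [E, Complex.norm_exp, Complex.mul_re]

lemma E_add (j k : ℤ) (θ : ℝ) : E (j + k) θ = E j θ * E k θ := by
  rw [E, E, E, ← Complex.exp_add]
  push_cast
  ring_nf

lemma E_conj (j : ℤ) (θ : ℝ) : (starRingEnd ℂ) (E j θ) = E (-j) θ := by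
  rw [E, E, ← Complex.exp_conj]
  push_cast
  simp [map_mul, Complex.conj_I, Complex.conj_ofReal]

lemma E_zero (θ : ℝ) : E 0 θ = 1 := by simp [E]

lemma integral_E (j : ℤ) :
    (∫ θ in (0:ℝ)..(2*π), E j θ) = if j = 0 then (2*π : ℂ) else 0 := by
  rcases eq_or_ne j 0 with h | h
  · subst h
    simp [E_zero]
  · rw [if_neg h]
    have hc : ((j : ℂ) * Complex.I) ≠ 0 := by
      simp [Complex.I_ne_zero, h]
    have : ∀ θ : ℝ, E j θ = Complex.exp ((j * Complex.I) * θ) := by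
      intro θ; rw [E]; ring_nf
    simp only [this]
    rw [integral_exp_mul_complex hc]
    have h2 : Complex.exp ((j : ℂ) * Complex.I * (2*π : ℝ)) = 1 := by
      have := Complex.exp_int_mul_two_pi_mul_I j
      rw [← this]
      push_cast
      ring_nf
    rw [h2]
    simp

lemma summable_abs_coeff {f : ℂ → ℂ} {a : ℕ → ℂ}
    (hsum : ∀ z ∈ ball (0 : ℂ) 1, HasSum (fun n : ℕ => a n * z ^ n) (f z))
    {r : ℝ} (hr0 : 0 ≤ r) (hr1 : r < 1) :
    Summable (fun j : ℕ => ‖a j‖ * r ^ j) := by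
  set ρ : ℝ := (r + 1) / 2 with hρ
  have hrρ : r < ρ := by rw [hρ]; linarith
  have hρ0 : 0 < ρ := by rw [hρ]; linarith
  have hρ1 : ρ < 1 := by rw [hρ]; linarith
  have hmem : (ρ : ℂ) ∈ ball (0 : ℂ) 1 := by
    simp [Complex.norm_real, abs_of_pos hρ0, hρ1]
  have hsummable := (hsum _ hmem).summable
  have htend := hsummable.tendsto_atTop_zero
  have hbd : ∃ C : ℝ, 0 ≤ C ∧ ∀ j : ℕ, ‖a j‖ * ρ ^ j ≤ C := by
    obtain ⟨C, hC⟩ := htend.norm.bddAbove_range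
    refine ⟨max C 0, le_max_right _ _, fun j => ?_⟩
    have := hC (Set.mem_range_self j)
    simp only [norm_mul, norm_pow, Complex.norm_real, Real.norm_eq_abs,
      abs_of_pos hρ0] at this
    exact le_trans this (le_max_left _ _)
  obtain ⟨C, hC0, hC⟩ := hbd
  have hgeo : Summable (fun j : ℕ => C * (r / ρ) ^ j) := by
    apply Summable.mul_left
    apply summable_geometric_of_lt_one (by positivity)
    rw [div_lt_one hρ0]; exact hrρ
  apply Summable.of_nonneg_of_le (fun j => by positivity) _ hgeo
  intro j
  have : ‖a j‖ * r ^ j = (‖a j‖ * ρ ^ j) * (r / ρ) ^ j := by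
    rw [mul_assoc, ← mul_pow, show ρ * (r / ρ) = r by field_simp]
  rw [this]
  apply mul_le_mul_of_nonneg_right (hC j) (by positivity)

lemma moments {f : ℂ → ℂ} {a : ℕ → ℂ} (ha0 : a 0 = 0) (ha1 : a 1 = 1)
    (hsum : ∀ z ∈ ball (0 : ℂ) 1, HasSum (fun n : ℕ => a n * z ^ n) (f z))
    (hre : ∀ z ∈ ball (0 : ℂ) 1, z ≠ 0 → 1 / 2 < (f z / z).re)
    {r : ℝ} (hr0 : 0 < r) (hr1 : r < 1) :
    ∃ W : ℝ → ℝ, Continuous W ∧ (∀ θ, 0 ≤ W θ) ∧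
      ((∫ θ in (0:ℝ)..(2*π), W θ) = 2*π) ∧
      (∀ k : ℕ, 1 ≤ k → (∫ θ in (0:ℝ)..(2*π), (W θ : ℂ) * E (-(k:ℤ)) θ)
          = ((2*π : ℝ) : ℂ) * (a (k+1) * (r:ℂ)^k)) := by
  set z : ℝ → ℂ := fun θ => (r:ℂ) * Complex.exp (θ * Complex.I) with hz
  have habs : ∀ θ, ‖z θ‖ = r := by
    intro θ
    simp [hz, Complex.norm_exp, abs_of_pos hr0]
  have hmem : ∀ θ, z θ ∈ ball (0:ℂ) 1 := by
    intro θ; simp [mem_ball, Complex.dist_eq, habs θ, hr1]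
  have hne : ∀ θ, z θ ≠ 0 := by
    intro θ h
    have := habs θ
    rw [h] at this
    simp at this
    exact absurd this (ne_of_gt hr0).symm
  -- the shifted HasSum
  have hH : ∀ θ, HasSum (fun j : ℕ => a (j+1) * (r:ℂ)^j * E j θ) (f (z θ) / z θ) := by
    intro θ
    have h1 := hsum (z θ) (hmem θ)
    rw [← hasSum_nat_add_iff' 1] at h1
    simp only [Finset.range_one, Finset.sum_singleton, pow_zero, mul_one, ha0, sub_zero] at h1
    have h2 := h1.div_const (z θ)
    have hterm : ∀ j : ℕ, a (j+1) * z θ ^ (j+1) / z θ = a (j+1) * (r:ℂ)^j * E j θ := by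
      intro j
      have hzθ : z θ = (r:ℂ) * Complex.exp (θ * Complex.I) := rfl
      have hzj : z θ ^ j = (r:ℂ)^j * E j θ := by
        rw [hzθ, mul_pow]
        congr 1
        rw [E, ← Complex.exp_nat_mul]
        congr 1
        push_cast
        ring
      rw [pow_succ, show a (j+1) * (z θ ^ j * z θ) / z θ = a (j+1) * z θ ^ j from by
        rw [← mul_assoc, mul_div_cancel_right₀ _ (hne θ)], hzj]
      ring
    simpa only [hterm] using h2
  set H : ℝ → ℂ := fun θ => ∑' j : ℕ, a (j+1) * (r:ℂ)^j * E j θ with hHdef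
  have hHeq : ∀ θ, H θ = f (z θ) / z θ := fun θ => (hH θ).tsum_eq
  have hsab : Summable (fun j : ℕ => ‖a (j+1)‖ * r ^ j) := by
    have h := summable_abs_coeff hsum hr0.le hr1
    have h2 := (summable_nat_add_iff 1).2 h
    have h3 := h2.mul_left r⁻¹
    refine h3.congr (fun j => ?_)
    rw [pow_succ, mul_comm, mul_assoc, mul_assoc, mul_inv_cancel₀ hr0.ne', mul_one]
  have contH : Continuous H := by
    rw [hHdef]
    refine continuous_tsum (u := fun j => ‖a (j+1)‖ * r ^ j)
      (fun j => continuous_const.mul (E_cont j)) hsab (fun j θ => ?_)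
    simp only [norm_mul, norm_pow, E_norm, mul_one, Complex.norm_real, Real.norm_eq_abs,
      abs_of_pos hr0]
    exact le_refl _
  set W : ℝ → ℝ := fun θ => 2 * (H θ).re - 1 with hWdef
  have contW : Continuous W := by fun_prop
  have hW0 : ∀ θ, 0 ≤ W θ := by
    intro θ
    have := hre (z θ) (hmem θ) (hne θ)
    rw [← hHeq θ] at this
    simp only [hWdef]
    linarith
  have ii : ∀ g : ℝ → ℂ, Continuous g → IntervalIntegrable g volume 0 (2*π) :=
    fun g hg => hg.intervalIntegrable _ _
  have contConj : ∀ g : ℝ → ℂ, Continuous g → Continuous fun x => (starRingEnd ℂ) (g x) :=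
    fun g hg => by simpa only [starRingEnd_apply] using hg.star
  have contHE : ∀ d : ℤ, Continuous fun θ => H θ * E d θ := fun d => contH.mul (E_cont d)
  -- termwise integration
  have hHd : ∀ d : ℤ, HasSum
      (fun j : ℕ => a (j+1) * (r:ℂ)^j * (if (j:ℤ) + d = 0 then ((2*π:ℝ):ℂ) else 0))
      (∫ θ in (0:ℝ)..(2*π), H θ * E d θ) := by
    intro d
    have h := intervalIntegral.hasSum_integral_of_dominated_convergence
      (μ := volume) (a := (0:ℝ)) (b := 2*π)
      (F := fun (j:ℕ) (θ:ℝ) => a (j+1) * (r:ℂ)^j * E j θ * E d θ)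
      (f := fun θ => H θ * E d θ)
      (bound := fun j _ => ‖a (j+1)‖ * r^j)
      (fun j => ((continuous_const.mul (E_cont (j:ℤ))).mul (E_cont d)).aestronglyMeasurable)
      (fun j => ae_of_all _ fun θ _ => by
        simp only [norm_mul, norm_pow, E_norm, mul_one, Complex.norm_real, Real.norm_eq_abs,
          abs_of_pos hr0]
        exact le_refl _)
      (ae_of_all _ fun θ _ => hsab)
      (continuous_const.intervalIntegrable _ _)
      (ae_of_all _ fun θ _ => by simpa only [← hHeq θ] using (hH θ).mul_right (E d θ))
    have heval : ∀ j : ℕ, (∫ θ in (0:ℝ)..(2*π), a (j+1) * (r:ℂ)^j * E j θ * E d θ)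
        = a (j+1) * (r:ℂ)^j * (if (j:ℤ) + d = 0 then ((2*π:ℝ):ℂ) else 0) := by
      intro j
      have : (fun θ => a (j+1) * (r:ℂ)^j * E j θ * E d θ)
          = fun θ => (a (j+1) * (r:ℂ)^j) * E ((j:ℤ) + d) θ := by
        funext θ; rw [E_add]; ring
      rw [this, intervalIntegral.integral_const_mul, integral_E]
      push_cast
      ring_nf
    simpa only [heval] using h
  have hHneg : ∀ k : ℕ, (∫ θ in (0:ℝ)..(2*π), H θ * E (-(k:ℤ)) θ)
      = ((2*π:ℝ):ℂ) * (a (k+1) * (r:ℂ)^k) := by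
    intro k
    rw [← (hHd (-(k:ℤ))).tsum_eq, tsum_eq_single k]
    · rw [if_pos (by ring)]; ring
    · intro j hj
      rw [if_neg (by omega), mul_zero]
  have hHpos : ∀ k : ℕ, 1 ≤ k → (∫ θ in (0:ℝ)..(2*π), H θ * E (k:ℤ) θ) = 0 := by
    intro k hk
    rw [← (hHd (k:ℤ)).tsum_eq]
    have : ∀ j : ℕ, a (j+1) * (r:ℂ)^j * (if (j:ℤ) + (k:ℤ) = 0 then ((2*π:ℝ):ℂ) else 0) = 0 := by
      intro j
      rw [if_neg (by omega), mul_zero]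
    rw [tsum_congr this, tsum_zero]
  have hconj : ∀ g : ℝ → ℂ, (∫ θ in (0:ℝ)..(2*π), (starRingEnd ℂ) (g θ))
      = (starRingEnd ℂ) (∫ θ in (0:ℝ)..(2*π), g θ) := by
    intro g
    simp only [intervalIntegral, integral_conj, map_sub]
  have hWc : ∀ θ, (W θ : ℂ) = H θ + (starRingEnd ℂ) (H θ) - 1 := by
    intro θ
    rw [Complex.add_conj]
    simp only [hWdef]
    push_cast
    ring
  have hintH : (∫ θ in (0:ℝ)..(2*π), H θ) = ((2*π:ℝ):ℂ) := by
    have h := hHneg 0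
    simp only [Nat.cast_zero, neg_zero, E_zero, mul_one, pow_zero, zero_add, ha1] at h
    simpa using h
  -- complex mass
  have hWCmass : (∫ θ in (0:ℝ)..(2*π), (W θ : ℂ)) = ((2*π:ℝ):ℂ) := by
    have : (fun θ => (W θ : ℂ)) = fun θ => H θ + (starRingEnd ℂ) (H θ) - 1 := funext hWc
    rw [this, intervalIntegral.integral_sub
        (ii (fun θ => H θ + (starRingEnd ℂ) (H θ)) (contH.add (contConj _ contH)))
        (ii _ continuous_const),
      intervalIntegral.integral_add (ii _ contH) (ii _ (contConj _ contH))]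
    rw [hintH, hconj H, hintH, Complex.conj_ofReal, intervalIntegral.integral_const]
    simp only [sub_zero, Complex.real_smul, mul_one]
    push_cast
    ring
  have hmass : (∫ θ in (0:ℝ)..(2*π), W θ) = 2*π := by
    have := intervalIntegral.integral_ofReal (f := W) (a := 0) (b := 2*π) (μ := volume)
    rw [hWCmass] at this
    exact_mod_cast this.symm
  refine ⟨W, contW, hW0, hmass, fun k hk => ?_⟩
  have : (fun θ => (W θ : ℂ) * E (-(k:ℤ)) θ)
      = fun θ => H θ * E (-(k:ℤ)) θ + (starRingEnd ℂ) (H θ * E (k:ℤ) θ) - E (-(k:ℤ)) θ := by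
    funext θ
    rw [map_mul, E_conj, hWc θ]
    ring
  rw [this, intervalIntegral.integral_sub
      (ii (fun θ => H θ * E (-(k:ℤ)) θ + (starRingEnd ℂ) (H θ * E (k:ℤ) θ))
        ((contHE _).add (contConj _ (contHE _)))) (ii _ (E_cont _)),
    intervalIntegral.integral_add (ii _ (contHE _)) (ii _ (contConj _ (contHE _)))]
  rw [hHneg k, hconj, hHpos k hk, integral_E]
  rw [if_neg (by omega)]
  simp

lemma amgm {t w x y : ℝ} (ht : 0 < t) (hw : 0 ≤ w) :
    w*(x*y) ≤ (t/2)*(w*x^2) + (1/(2*t))*(w*y^2) := by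
  have h1 : 0 ≤ w*(t*x - y)^2 := mul_nonneg hw (sq_nonneg _)
  have h2 : (t/2)*(w*x^2) + (1/(2*t))*(w*y^2) - w*(x*y) = (1/(2*t)) * (w * (t*x - y)^2) := by
    field_simp
    ring
  nlinarith [mul_nonneg (by positivity : (0:ℝ) ≤ 1/(2*t)) h1]

lemma coeffBound {f : ℂ → ℂ} {a : ℕ → ℂ} (ha0 : a 0 = 0) (ha1 : a 1 = 1)
    (hsum : ∀ z ∈ ball (0 : ℂ) 1, HasSum (fun n : ℕ => a n * z ^ n) (f z))
    (hre : ∀ z ∈ ball (0 : ℂ) 1, z ≠ 0 → 1 / 2 < (f z / z).re)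
    (k : ℕ) (hk : 1 ≤ k) {r : ℝ} (hr0 : 0 < r) (hr1 : r < 1) :
    ‖a (k+1) * (r:ℂ)^k‖ ≤ 1 := by
  obtain ⟨W, contW, hW0, hmass, hmom⟩ := moments ha0 ha1 hsum hre hr0 hr1
  have hπ : (0:ℝ) < 2*π := by positivity
  have hnorm : ‖((2*π:ℝ):ℂ) * (a (k+1) * (r:ℂ)^k)‖ ≤ 2*π := by
    rw [← hmom k hk]
    calc ‖∫ θ in (0:ℝ)..(2*π), (W θ:ℂ) * E (-(k:ℤ)) θ‖
        ≤ ∫ θ in (0:ℝ)..(2*π), ‖(W θ:ℂ) * E (-(k:ℤ)) θ‖ :=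
          intervalIntegral.norm_integral_le_integral_norm (le_of_lt hπ)
      _ = ∫ θ in (0:ℝ)..(2*π), W θ := by
          congr 1
          funext θ
          simp [norm_mul, E_norm, Complex.norm_real,
            abs_of_nonneg (hW0 θ)]
      _ = 2*π := hmass
  rw [norm_mul, Complex.norm_real, Real.norm_eq_abs, abs_of_pos hπ] at hnorm
  nlinarith [hnorm, hπ]

lemma key {f : ℂ → ℂ} {a : ℕ → ℂ} (ha0 : a 0 = 0) (ha1 : a 1 = 1)
    (hsum : ∀ z ∈ ball (0 : ℂ) 1, HasSum (fun n : ℕ => a n * z ^ n) (f z))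
    (hre : ∀ z ∈ ball (0 : ℂ) 1, z ≠ 0 → 1 / 2 < (f z / z).re)
    (M N : ℕ) (hM : 1 ≤ M) (hN : 1 ≤ N) {t r : ℝ}
    (ht : 0 < t) (hr0 : 0 < r) (hr1 : r < 1) :
    ‖a (M+N+1) * (r:ℂ)^(M+N) - (a (M+1) * (r:ℂ)^M) * (a (N+1) * (r:ℂ)^N)‖
      ≤ (t * (1 - ‖a (M+1) * (r:ℂ)^M‖^2)
         + (1 - ‖a (N+1) * (r:ℂ)^N‖^2)/t)/2 := by
  obtain ⟨W, contW, hW0, hmass, hmom⟩ := moments ha0 ha1 hsum hre hr0 hr1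
  have hπ : (0:ℝ) < 2*π := by positivity
  have contWC : Continuous fun θ => ((W θ : ℝ):ℂ) := Complex.continuous_ofReal.comp contW
  have contWE : ∀ d : ℤ, Continuous fun θ => (W θ:ℂ) * E d θ :=
    fun d => contWC.mul (E_cont d)
  have ii : ∀ g : ℝ → ℂ, Continuous g → IntervalIntegrable g volume 0 (2*π) :=
    fun g hg => hg.intervalIntegrable _ _
  have iir : ∀ g : ℝ → ℝ, Continuous g → IntervalIntegrable g volume 0 (2*π) :=
    fun g hg => hg.intervalIntegrable _ _
  have hconj : ∀ g : ℝ → ℂ, (∫ θ in (0:ℝ)..(2*π), (starRingEnd ℂ) (g θ))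
      = (starRingEnd ℂ) (∫ θ in (0:ℝ)..(2*π), g θ) := by
    intro g
    simp only [intervalIntegral, integral_conj, map_sub]
  have hmassC : (∫ θ in (0:ℝ)..(2*π), ((W θ:ℝ):ℂ)) = ((2*π:ℝ):ℂ) := by
    rw [intervalIntegral.integral_ofReal, hmass]
  have hmomconj : ∀ k : ℕ, 1 ≤ k → (∫ θ in (0:ℝ)..(2*π), (W θ:ℂ) * E (k:ℤ) θ)
      = ((2*π:ℝ):ℂ) * (starRingEnd ℂ) (a (k+1) * (r:ℂ)^k) := by
    intro k hk
    have hpt : (fun θ => (W θ:ℂ) * E (k:ℤ) θ)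
        = fun θ => (starRingEnd ℂ) ((W θ:ℂ) * E (-(k:ℤ)) θ) := by
      funext θ
      rw [map_mul, E_conj, neg_neg, Complex.conj_ofReal]
    rw [hpt, hconj, hmom k hk, map_mul, Complex.conj_ofReal]
  set φ : ℝ → ℂ := fun θ => E (-(M:ℤ)) θ - a (M+1) * (r:ℂ)^M with hφ
  set ψ : ℝ → ℂ := fun θ => E (-(N:ℤ)) θ - a (N+1) * (r:ℂ)^N with hψ
  have contφ : Continuous φ := (E_cont _).sub continuous_const
  have contψ : Continuous ψ := (E_cont _).sub continuous_const
  have hMN : (1:ℕ) ≤ M + N := by omega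
  -- first complex moment identity
  have I1 : (∫ θ in (0:ℝ)..(2*π), (W θ:ℂ) * (φ θ * ψ θ))
      = ((2*π:ℝ):ℂ) * (a (M+N+1) * (r:ℂ)^(M+N)
          - (a (M+1) * (r:ℂ)^M) * (a (N+1) * (r:ℂ)^N)) := by
    have expand : (fun θ => (W θ:ℂ) * (φ θ * ψ θ))
        = fun θ => ((W θ:ℂ) * E (-((M+N:ℕ):ℤ)) θ
              - (a (N+1) * (r:ℂ)^N) * ((W θ:ℂ) * E (-(M:ℤ)) θ))
            - ((a (M+1) * (r:ℂ)^M) * ((W θ:ℂ) * E (-(N:ℤ)) θ)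
              - ((a (M+1) * (r:ℂ)^M) * (a (N+1) * (r:ℂ)^N)) * ((W θ:ℝ):ℂ)) := by
      funext θ
      have hEE : E (-((M+N:ℕ):ℤ)) θ = E (-(M:ℤ)) θ * E (-(N:ℤ)) θ := by
        rw [← E_add]
        congr 1
        push_cast
        ring
      rw [hφ, hψ, hEE]
      ring
    rw [expand, intervalIntegral.integral_sub
        ((ii _ (contWE _)).sub ((ii _ (contWE _)).const_mul _))
        (((ii _ (contWE _)).const_mul _).sub ((ii _ contWC).const_mul _)),
      intervalIntegral.integral_sub (ii _ (contWE _)) ((ii _ (contWE _)).const_mul _),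
      intervalIntegral.integral_sub ((ii _ (contWE _)).const_mul _) ((ii _ contWC).const_mul _),
      intervalIntegral.integral_const_mul, intervalIntegral.integral_const_mul,
      intervalIntegral.integral_const_mul,
      hmom (M+N) hMN, hmom M hM, hmom N hN, hmassC]
    push_cast
    ring
  -- second moment identities, real form
  have I2gen : ∀ K : ℕ, 1 ≤ K →
      (∫ θ in (0:ℝ)..(2*π), W θ * ‖E (-(K:ℤ)) θ - a (K+1) * (r:ℂ)^K‖^2)
        = 2*π * (1 - ‖a (K+1) * (r:ℂ)^K‖^2) := by
    intro K hK
    have IC : (∫ θ in (0:ℝ)..(2*π), (W θ:ℂ) * ((E (-(K:ℤ)) θ - a (K+1) * (r:ℂ)^K)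
          * (starRingEnd ℂ) (E (-(K:ℤ)) θ - a (K+1) * (r:ℂ)^K)))
        = ((2*π:ℝ):ℂ) * (1 - (a (K+1) * (r:ℂ)^K)
            * (starRingEnd ℂ) (a (K+1) * (r:ℂ)^K)) := by
      have expand : (fun θ => (W θ:ℂ) * ((E (-(K:ℤ)) θ - a (K+1) * (r:ℂ)^K)
            * (starRingEnd ℂ) (E (-(K:ℤ)) θ - a (K+1) * (r:ℂ)^K)))
          = fun θ => (((W θ:ℝ):ℂ)
                - (starRingEnd ℂ) (a (K+1) * (r:ℂ)^K) * ((W θ:ℂ) * E (-(K:ℤ)) θ))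
              - ((a (K+1) * (r:ℂ)^K) * ((W θ:ℂ) * E (K:ℤ) θ)
                - ((a (K+1) * (r:ℂ)^K) * (starRingEnd ℂ) (a (K+1) * (r:ℂ)^K))
                  * ((W θ:ℝ):ℂ)) := by
        funext θ
        rw [map_sub, E_conj, neg_neg]
        have h1 : E (-(K:ℤ)) θ * E (K:ℤ) θ = 1 := by
          rw [← E_add]
          simp [E_zero]
        linear_combination ((W θ:ℝ):ℂ) * h1
      rw [expand, intervalIntegral.integral_sub
          ((ii _ contWC).sub ((ii _ (contWE _)).const_mul _))
          (((ii _ (contWE _)).const_mul _).sub ((ii _ contWC).const_mul _)),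
        intervalIntegral.integral_sub (ii _ contWC) ((ii _ (contWE _)).const_mul _),
        intervalIntegral.integral_sub ((ii _ (contWE _)).const_mul _)
          ((ii _ contWC).const_mul _),
        intervalIntegral.integral_const_mul, intervalIntegral.integral_const_mul,
        intervalIntegral.integral_const_mul,
        hmom K hK, hmomconj K hK, hmassC]
      ring
    have hpt : (fun θ => ((W θ * ‖E (-(K:ℤ)) θ - a (K+1) * (r:ℂ)^K‖^2 : ℝ) : ℂ))
        = fun θ => (W θ:ℂ) * ((E (-(K:ℤ)) θ - a (K+1) * (r:ℂ)^K)
            * (starRingEnd ℂ) (E (-(K:ℤ)) θ - a (K+1) * (r:ℂ)^K)) := by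
      funext θ
      rw [Complex.mul_conj, Complex.normSq_eq_norm_sq]
      push_cast
      ring
    have := intervalIntegral.integral_ofReal
      (f := fun θ => W θ * ‖E (-(K:ℤ)) θ - a (K+1) * (r:ℂ)^K‖^2)
      (a := 0) (b := 2*π) (μ := volume)
    rw [hpt] at this
    rw [IC] at this
    have hval : ((2*π:ℝ):ℂ) * (1 - (a (K+1) * (r:ℂ)^K)
        * (starRingEnd ℂ) (a (K+1) * (r:ℂ)^K))
        = (((2*π * (1 - ‖a (K+1) * (r:ℂ)^K‖^2) : ℝ)):ℂ) := by
      rw [Complex.mul_conj, Complex.normSq_eq_norm_sq]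
      push_cast
      ring
    rw [hval] at this
    exact_mod_cast this.symm
  have R2 := I2gen M hM
  have R3 := I2gen N hN
  -- norm bound step
  have contabsφ : Continuous fun θ => ‖φ θ‖ := continuous_norm.comp contφ
  have contabsψ : Continuous fun θ => ‖ψ θ‖ := continuous_norm.comp contψ
  have step1 : 2*π * ‖a (M+N+1) * (r:ℂ)^(M+N)
        - (a (M+1) * (r:ℂ)^M) * (a (N+1) * (r:ℂ)^N)‖
      ≤ ∫ θ in (0:ℝ)..(2*π), W θ * (‖φ θ‖ * ‖ψ θ‖) := by
    have h1 := intervalIntegral.norm_integral_le_integral_norm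
      (f := fun θ => (W θ:ℂ) * (φ θ * ψ θ)) (a := 0) (b := 2*π) (μ := volume) (le_of_lt hπ)
    rw [I1] at h1
    simp only [norm_mul, Complex.norm_real, Real.norm_eq_abs, abs_two, abs_of_pos Real.pi_pos] at h1
    calc 2*π * ‖a (M+N+1) * (r:ℂ)^(M+N)
          - (a (M+1) * (r:ℂ)^M) * (a (N+1) * (r:ℂ)^N)‖
        ≤ ∫ θ in (0:ℝ)..(2*π), |W θ| * (‖φ θ‖ * ‖ψ θ‖) := h1
      _ = ∫ θ in (0:ℝ)..(2*π), W θ * (‖φ θ‖ * ‖ψ θ‖) := by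
          congr 1
          funext θ
          rw [abs_of_nonneg (hW0 θ)]
  have step2 : (∫ θ in (0:ℝ)..(2*π), W θ * (‖φ θ‖ * ‖ψ θ‖))
      ≤ ∫ θ in (0:ℝ)..(2*π), ((t/2) * (W θ * ‖φ θ‖^2)
          + (1/(2*t)) * (W θ * ‖ψ θ‖^2)) := by
    apply intervalIntegral.integral_mono_on (le_of_lt hπ)
    · exact iir _ (contW.mul (contabsφ.mul contabsψ))
    · apply iir
      apply Continuous.add
      · exact continuous_const.mul (contW.mul (contabsφ.pow 2))
      · exact continuous_const.mul (contW.mul (contabsψ.pow 2))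
    · intro θ _
      exact amgm ht (hW0 θ)
  have step3 : (∫ θ in (0:ℝ)..(2*π), ((t/2) * (W θ * ‖φ θ‖^2)
          + (1/(2*t)) * (W θ * ‖ψ θ‖^2)))
      = 2*π * ((t * (1 - ‖a (M+1) * (r:ℂ)^M‖^2)
          + (1 - ‖a (N+1) * (r:ℂ)^N‖^2)/t)/2) := by
    rw [intervalIntegral.integral_add
        ((iir (fun θ => W θ * ‖φ θ‖^2) (contW.mul (contabsφ.pow 2))).const_mul _)
        ((iir (fun θ => W θ * ‖ψ θ‖^2) (contW.mul (contabsψ.pow 2))).const_mul _),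
      intervalIntegral.integral_const_mul, intervalIntegral.integral_const_mul]
    rw [hφ, hψ] at *
    rw [R2, R3]
    field_simp
  rw [step3] at step2
  have := le_trans step1 step2
  exact le_of_mul_le_mul_left this hπ

open Filter Topology in
lemma coeffLimit {f : ℂ → ℂ} {a : ℕ → ℂ} (ha0 : a 0 = 0) (ha1 : a 1 = 1)
    (hsum : ∀ z ∈ ball (0 : ℂ) 1, HasSum (fun n : ℕ => a n * z ^ n) (f z))
    (hre : ∀ z ∈ ball (0 : ℂ) 1, z ≠ 0 → 1 / 2 < (f z / z).re)
    (k : ℕ) (hk : 1 ≤ k) : ‖a (k+1)‖ ≤ 1 := by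
  have hev : ∀ᶠ r in 𝓝[<] (1:ℝ), r ∈ Set.Ioo (0:ℝ) 1 :=
    Ioo_mem_nhdsLT_of_mem (by constructor <;> norm_num)
  have hcont : Continuous fun r : ℝ => ‖a (k+1) * (r:ℂ)^k‖ :=
    continuous_norm.comp (continuous_const.mul (Complex.continuous_ofReal.pow k))
  have htend : Tendsto (fun r : ℝ => ‖a (k+1) * (r:ℂ)^k‖) (𝓝[<] (1:ℝ))
      (𝓝 (‖a (k+1)‖)) := by
    have h1 := (hcont.tendsto 1).mono_left (nhdsWithin_le_nhds (s := Set.Iio (1:ℝ)))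
    simpa using h1
  exact le_of_tendsto htend (hev.mono fun r hr => coeffBound ha0 ha1 hsum hre k hk hr.1 hr.2)

open Filter Topology in
lemma keyLimit {f : ℂ → ℂ} {a : ℕ → ℂ} (ha0 : a 0 = 0) (ha1 : a 1 = 1)
    (hsum : ∀ z ∈ ball (0 : ℂ) 1, HasSum (fun n : ℕ => a n * z ^ n) (f z))
    (hre : ∀ z ∈ ball (0 : ℂ) 1, z ≠ 0 → 1 / 2 < (f z / z).re)
    (M N : ℕ) (hM : 1 ≤ M) (hN : 1 ≤ N) {t : ℝ} (ht : 0 < t) :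
    ‖a (M+N+1) - a (M+1) * a (N+1)‖
      ≤ (t * (1 - ‖a (M+1)‖^2) + (1 - ‖a (N+1)‖^2)/t)/2 := by
  have hev : ∀ᶠ r in 𝓝[<] (1:ℝ), r ∈ Set.Ioo (0:ℝ) 1 :=
    Ioo_mem_nhdsLT_of_mem (by constructor <;> norm_num)
  have hcontF : Continuous fun r : ℝ => ‖a (M+N+1) * (r:ℂ)^(M+N)
      - (a (M+1) * (r:ℂ)^M) * (a (N+1) * (r:ℂ)^N)‖ := by
    apply continuous_norm.comp
    exact (continuous_const.mul (Complex.continuous_ofReal.pow _)).sub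
      ((continuous_const.mul (Complex.continuous_ofReal.pow _)).mul
        (continuous_const.mul (Complex.continuous_ofReal.pow _)))
  have hF : Tendsto (fun r : ℝ => ‖a (M+N+1) * (r:ℂ)^(M+N)
      - (a (M+1) * (r:ℂ)^M) * (a (N+1) * (r:ℂ)^N)‖) (𝓝[<] (1:ℝ))
      (𝓝 (‖a (M+N+1) - a (M+1) * a (N+1)‖)) := by
    have h1 := (hcontF.tendsto 1).mono_left (nhdsWithin_le_nhds (s := Set.Iio (1:ℝ)))
    simpa using h1
  have hcontG : Continuous fun r : ℝ =>
      (t * (1 - ‖a (M+1) * (r:ℂ)^M‖^2)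
        + (1 - ‖a (N+1) * (r:ℂ)^N‖^2)/t)/2 := by
    apply Continuous.div_const
    apply Continuous.add
    · apply continuous_const.mul
      apply continuous_const.sub
      exact (continuous_norm.comp
        (continuous_const.mul (Complex.continuous_ofReal.pow _))).pow 2
    · apply Continuous.div_const
      apply continuous_const.sub
      exact (continuous_norm.comp
        (continuous_const.mul (Complex.continuous_ofReal.pow _))).pow 2
  have hG : Tendsto (fun r : ℝ =>
      (t * (1 - ‖a (M+1) * (r:ℂ)^M‖^2)
        + (1 - ‖a (N+1) * (r:ℂ)^N‖^2)/t)/2) (𝓝[<] (1:ℝ))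
      (𝓝 ((t * (1 - ‖a (M+1)‖^2) + (1 - ‖a (N+1)‖^2)/t)/2)) := by
    have h1 := (hcontG.tendsto 1).mono_left (nhdsWithin_le_nhds (s := Set.Iio (1:ℝ)))
    simpa using h1
  exact le_of_tendsto_of_tendsto hF hG
    (hev.mono fun r hr => key ha0 ha1 hsum hre M N hM hN ht hr.1 hr.2)

end Zal

lemma final_algebra (x y D : ℝ) (hx0 : 0 ≤ x) (hy0 : 0 ≤ y) (hx1 : x ≤ 1) (hy1 : y ≤ 1)
    (hD0 : 0 ≤ D)
    (hkey : ∀ t : ℝ, 0 < t → D ≤ (t * (1 - x^2) + (1 - y^2)/t)/2) :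
    D ≤ 1 - x*y := by
  rcases lt_or_ge x 1 with hxlt | hxge
  · have hu : 0 < 1 - x * y := by nlinarith
    have hx2 : 0 < 1 - x^2 := by nlinarith
    have htpos : 0 < (1 - x*y)/(1 - x^2) := div_pos hu hx2
    have h := hkey _ htpos
    have e1 : ((1 - x*y)/(1 - x^2)) * (1 - x^2) = 1 - x*y := by field_simp
    have e2 : (1 - y^2)/((1 - x*y)/(1 - x^2)) = (1 - y^2)*(1 - x^2)/(1 - x*y) := by
      rw [div_div_eq_mul_div]
    rw [e1, e2] at h
    have h3 : (1 - y^2)*(1 - x^2) ≤ (1 - x*y)*(1 - x*y) := by nlinarith [sq_nonneg (x - y)]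
    have h4 : (1 - y^2)*(1 - x^2)/(1 - x*y) ≤ 1 - x*y := by
      rw [div_le_iff₀ hu]
      exact h3
    linarith
  · have hxeq : x = 1 := le_antisymm hx1 hxge
    have hD0' : D ≤ 0 := by
      by_contra hc
      push_neg at hc
      have hy2 : 0 ≤ 1 - y^2 := by nlinarith
      have htpos : 0 < (2 - y^2)/(2*D) := div_pos (by nlinarith) (by nlinarith)
      have h := hkey _ htpos
      rw [hxeq] at h
      have e1 : ((2 - y^2)/(2*D)) * (1 - 1^2) = 0 := by ring
      rw [e1] at h
      have e2 : (1 - y^2)/((2 - y^2)/(2*D)) = (1 - y^2)*(2*D)/(2 - y^2) := by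
        rw [div_div_eq_mul_div]
      rw [e2] at h
      have h5 : (1 - y^2)*(2*D)/(2 - y^2) < 2*D := by
        rw [div_lt_iff₀ (by nlinarith)]
        nlinarith
      linarith
    nlinarith

lemma final_comb (x y D K L : ℝ) (hx0 : 0 ≤ x) (hy0 : 0 ≤ y) (hx1 : x ≤ 1) (hy1 : y ≤ 1)
    (h1K : 1 ≤ K) (hL0 : 0 ≤ L) (hLK : L ≤ K) (hDb : D ≤ 1 - x*y) :
    L*(x*y) + D ≤ K := by
  have hxy0 : 0 ≤ x * y := mul_nonneg hx0 hy0
  have hxy1 : x * y ≤ 1 := mul_le_one₀ hx1 hy0 hy1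
  nlinarith

open Zal in
/-- If `f` is in the closed convex hull of the convex univalent functions
(equivalently, `f` is analytic on the unit disk with `f(0) = 0`, `f'(0) = 1` and
`Re (f z / z) > 1/2` for `z ≠ 0` in the disk), with Taylor coefficients `a`, then
for `m, n ≥ 2` and every `λ : ℂ`: `|λ a_m a_n - a_{m+n-1}| ≤ max 1 |1 - λ|`. -/
theorem convexHull_convex_zalcman (f : ℂ → ℂ) (a : ℕ → ℂ)
    (ha0 : a 0 = 0) (ha1 : a 1 = 1)
    (hsum : ∀ z ∈ ball (0 : ℂ) 1, HasSum (fun n : ℕ => a n * z ^ n) (f z))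
    (hre : ∀ z ∈ ball (0 : ℂ) 1, z ≠ 0 → 1 / 2 < (f z / z).re)
    (m n : ℕ) (hm : 2 ≤ m) (hn : 2 ≤ n) :
    ∀ lam : ℂ, ‖lam * (a m * a n) - a (m + n - 1)‖ ≤
      max 1 ‖1 - lam‖ := by
  intro lam
  obtain ⟨M, rfl⟩ : ∃ M, m = M + 1 := ⟨m - 1, by omega⟩
  obtain ⟨N, rfl⟩ : ∃ N, n = N + 1 := ⟨n - 1, by omega⟩
  have hM : 1 ≤ M := by omega
  have hN : 1 ≤ N := by omega
  have hidx : M + 1 + (N + 1) - 1 = M + N + 1 := by omega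
  rw [hidx]
  have h1K : (1:ℝ) ≤ max 1 (‖1 - lam‖) := le_max_left _ _
  have hlamK' : ‖lam - 1‖ ≤ max 1 (‖1 - lam‖) := by
    rw [show lam - 1 = -(1 - lam) by ring, norm_neg]
    exact le_max_right _ _
  have hx0 : 0 ≤ ‖a (M+1)‖ := norm_nonneg _
  have hy0 : 0 ≤ ‖a (N+1)‖ := norm_nonneg _
  have hx1 : ‖a (M+1)‖ ≤ 1 := coeffLimit ha0 ha1 hsum hre M hM
  have hy1 : ‖a (N+1)‖ ≤ 1 := coeffLimit ha0 ha1 hsum hre N hN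
  have hD0 : 0 ≤ ‖a (M+N+1) - a (M+1) * a (N+1)‖ := norm_nonneg _
  have hkey : ∀ t : ℝ, 0 < t → ‖a (M+N+1) - a (M+1) * a (N+1)‖
      ≤ (t * (1 - ‖a (M+1)‖^2) + (1 - ‖a (N+1)‖^2)/t)/2 :=
    fun t ht => keyLimit ha0 ha1 hsum hre M N hM hN ht
  have htri : ‖lam * (a (M+1) * a (N+1)) - a (M+N+1)‖
      ≤ ‖lam - 1‖ * (‖a (M+1)‖ * ‖a (N+1)‖)
        + ‖a (M+N+1) - a (M+1) * a (N+1)‖ := by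
    calc ‖lam * (a (M+1) * a (N+1)) - a (M+N+1)‖
        = ‖(lam - 1) * (a (M+1) * a (N+1))
            + (a (M+1) * a (N+1) - a (M+N+1))‖ := by
          congr 1
          ring
      _ ≤ ‖(lam - 1) * (a (M+1) * a (N+1))‖
          + ‖a (M+1) * a (N+1) - a (M+N+1)‖ := norm_add_le _ _
      _ = ‖lam - 1‖ * (‖a (M+1)‖ * ‖a (N+1)‖)
          + ‖a (M+N+1) - a (M+1) * a (N+1)‖ := by
          rw [norm_mul, norm_mul, show a (M+1) * a (N+1) - a (M+N+1)
            = -(a (M+N+1) - a (M+1) * a (N+1)) by ring, norm_neg]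
  have hDb := final_algebra (‖a (M+1)‖) (‖a (N+1)‖)
    (‖a (M+N+1) - a (M+1) * a (N+1)‖) hx0 hy0 hx1 hy1 hD0 hkey
  refine le_trans htri ?_
  exact final_comb _ _ _ _ _ hx0 hy0 hx1 hy1 h1K (norm_nonneg _) hlamK' hDb
end

section
/- Suppose f belongs to the closed convex hull of the starlike functions; equivalently, f(z) = (z/2)·(1 + g(z) + z·g'(z)) on 𝔻 for some g ∈ P, so that its Taylor coefficients satisfy a_n = n·p_{n−1}/2 for n ≥ 2. Then for all m, n ≥ 2: |a_m·a_n/(mn) − a_{m+n−1}/(m+n−1)| + |a_m·a_n|/(mn) ≤ 1. -/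
open Metric

open Complex Real Filter MeasureTheory intervalIntegral in
private lemma conj_intervalIntegral' {f : ℝ → ℂ} {a b : ℝ} :
    (starRingEnd ℂ) (∫ x in a..b, f x) = ∫ x in a..b, (starRingEnd ℂ) (f x) := by
  simp only [intervalIntegral, map_sub, ← integral_conj]

open Complex Real Filter in
private lemma ebasic' (j : ℤ) :
    (∫ θ in (0:ℝ)..(2*Real.pi), Complex.exp (j*θ*Complex.I))
      = if j = 0 then (2*Real.pi:ℂ) else 0 := by
  by_cases hj : j = 0
  · subst hj
    simp only [Int.cast_zero, zero_mul, Complex.exp_zero, if_true]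
    rw [intervalIntegral.integral_const]
    rw [Complex.real_smul]
    push_cast
    ring
  · rw [if_neg hj]
    have hc : ((j:ℂ)*Complex.I) ≠ 0 :=
      mul_ne_zero (Int.cast_ne_zero.mpr hj) Complex.I_ne_zero
    have := integral_exp_mul_complex (a := (0:ℝ)) (b := 2*Real.pi) hc
    rw [show (fun x : ℝ => Complex.exp ((j:ℂ)*Complex.I*x))
        = fun x : ℝ => Complex.exp ((j:ℂ)*x*Complex.I) from funext fun x => by ring_nf] at this
    rw [this]
    rw [show ((j:ℂ)*Complex.I*(2*Real.pi:ℝ)) = (j:ℂ)*(2*Real.pi*Complex.I) by push_cast; ring]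
    rw [Complex.exp_int_mul_two_pi_mul_I]
    simp

open Complex Real Filter in
set_option maxHeartbeats 1000000 in
private lemma summable_aux_s12 (g : ℂ → ℂ) (p : ℕ → ℂ)
    (hsum : ∀ z ∈ ball (0 : ℂ) 1, HasSum (fun n : ℕ => p n * z ^ n) (g z))
    (s : ℝ) (hs0 : 0 ≤ s) (hs1 : s < 1) :
    Summable (fun n => ‖p n‖ * s ^ n) := by
  obtain ⟨t, hst, ht1⟩ : ∃ t : ℝ, s < t ∧ t < 1 := ⟨(s+1)/2, by linarith, by linarith⟩
  have ht0 : 0 < t := lt_of_le_of_lt hs0 hst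
  have hmem : (t:ℂ) ∈ ball (0:ℂ) 1 := by
    rw [mem_ball_zero_iff]
    simp only [Complex.norm_real, Real.norm_eq_abs, abs_of_pos ht0]
    exact ht1
  have hS := (hsum _ hmem).summable
  have h0 : Filter.Tendsto (fun n => ‖p n * (t:ℂ)^n‖) atTop (nhds 0) := by
    simpa using hS.tendsto_atTop_zero.norm
  obtain ⟨C, hC⟩ := h0.bddAbove_range
  have hCn : ∀ n, ‖p n * (t:ℂ)^n‖ ≤ C := fun n => hC (Set.mem_range_self n)
  refine Summable.of_nonneg_of_le (fun n => by positivity) (fun n => ?_)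
    ((summable_geometric_of_lt_one (by positivity) ((div_lt_one ht0).mpr hst)).mul_left C)
  have h1 : ‖p n * (t:ℂ)^n‖ = ‖p n‖ * t^n := by
    rw [norm_mul, norm_pow]
    simp [Complex.norm_real, abs_of_pos ht0]
  have h2 : ‖p n‖ * s^n = ‖p n * (t:ℂ)^n‖ * (s/t)^n := by
    rw [h1]
    field_simp
    rw [mul_assoc _ (t^n), ← mul_pow, show t * (s / t) = s by field_simp]
  rw [h2]
  exact mul_le_mul_of_nonneg_right (hCn n) (by positivity)

private noncomputable def ecirc (j : ℤ) (θ : ℝ) : ℂ := Complex.exp (j * θ * Complex.I)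

private lemma ecirc_continuous (j : ℤ) : Continuous (ecirc j) := by
  unfold ecirc
  exact Complex.continuous_exp.comp (by fun_prop)

private lemma ecirc_mul (j j' : ℤ) (θ : ℝ) : ecirc j θ * ecirc j' θ = ecirc (j+j') θ := by
  unfold ecirc
  rw [← Complex.exp_add]
  congr 1
  push_cast
  ring

private lemma ecirc_zero (θ : ℝ) : ecirc 0 θ = 1 := by
  simp [ecirc]

private lemma ecirc_conj (j : ℤ) (θ : ℝ) :
    (starRingEnd ℂ) (ecirc j θ) = ecirc (-j) θ := by
  unfold ecirc
  rw [← Complex.exp_conj]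
  congr 1
  simp only [map_mul, Complex.conj_I, Complex.conj_ofReal, map_intCast]
  push_cast
  ring

private lemma ecirc_abs (j : ℤ) (θ : ℝ) : ‖ecirc j θ‖ = 1 := by
  unfold ecirc
  rw [Complex.norm_exp]
  norm_num [Complex.mul_I_re]

private lemma ecirc_integral (j : ℤ) :
    (∫ θ in (0:ℝ)..(2*Real.pi), ecirc j θ) = if j = 0 then (2*Real.pi:ℂ) else 0 :=
  ebasic' j

private lemma zabs_aux {r : ℝ} (hr0 : 0 < r) (θ : ℝ) :
    ‖(r:ℂ) * Complex.exp (θ * Complex.I)‖ = r := by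
  simp only [norm_mul, Complex.norm_real, Real.norm_eq_abs, abs_of_pos hr0, Complex.norm_exp, Complex.mul_I_re,
    Complex.ofReal_im, neg_zero, Real.exp_zero, mul_one]

private lemma zmem_aux {r : ℝ} (hr0 : 0 < r) (hr1 : r < 1) (θ : ℝ) :
    ((r:ℂ) * Complex.exp (θ * Complex.I)) ∈ ball (0:ℂ) 1 := by
  rw [mem_ball_zero_iff, zabs_aux hr0]
  exact hr1

private lemma contg_aux (g : ℂ → ℂ) (p : ℕ → ℂ)
    (hsum : ∀ z ∈ ball (0 : ℂ) 1, HasSum (fun n : ℕ => p n * z ^ n) (g z))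
    {r : ℝ} (hr0 : 0 < r) (hr1 : r < 1) :
    Continuous fun θ : ℝ => g ((r:ℂ) * Complex.exp (θ * Complex.I)) := by
  have hrad : 1 ≤ (FormalMultilinearSeries.ofScalars ℂ p).radius := by
    apply ENNReal.le_of_forall_nnreal_lt
    intro q hq
    apply FormalMultilinearSeries.le_radius_of_summable
    have hq1 : (q:ℝ) < 1 := by exact_mod_cast hq
    simp only [FormalMultilinearSeries.ofScalars_norm]
    exact summable_aux_s12 g p hsum q q.coe_nonneg hq1
  have hF : HasFPowerSeriesOnBall g (FormalMultilinearSeries.ofScalars ℂ p) 0 1 :=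
    { r_le := hrad
      r_pos := one_pos
      hasSum := by
        intro y hy
        have hball : Metric.eball (0:ℂ) 1 = ball (0:ℂ) 1 := by
          rw [← ENNReal.coe_one, Metric.emetric_ball_nnreal, NNReal.coe_one]
        have hy' : y ∈ ball (0:ℂ) 1 := by rw [← hball]; exact hy
        rw [zero_add]
        simp only [FormalMultilinearSeries.ofScalars_apply_eq, smul_eq_mul]
        exact hsum y hy' }
  have hball : Metric.eball (0:ℂ) 1 = ball (0:ℂ) 1 := by
    rw [← ENNReal.coe_one, Metric.emetric_ball_nnreal, NNReal.coe_one]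
  have hcont : ContinuousOn g (ball (0:ℂ) 1) := by
    have := hF.continuousOn
    rwa [hball] at this
  exact hcont.comp_continuous (by fun_prop) (fun θ => zmem_aux hr0 hr1 θ)

open Complex Real Filter MeasureTheory in
private lemma Ig_aux (g : ℂ → ℂ) (p : ℕ → ℂ)
    (hsum : ∀ z ∈ ball (0 : ℂ) 1, HasSum (fun n : ℕ => p n * z ^ n) (g z))
    {r : ℝ} (hr0 : 0 < r) (hr1 : r < 1) (j : ℤ) :
    (∫ θ in (0:ℝ)..(2*Real.pi), ecirc j θ * g ((r:ℂ) * Complex.exp (θ * Complex.I)))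
      = if j ≤ 0 then 2*Real.pi * (p (-j).toNat * (r:ℂ)^(-j).toNat) else 0 := by
  set F : ℕ → C(ℝ, ℂ) := fun n =>
    ⟨fun θ => ecirc j θ * (p n * ((r:ℂ) * Complex.exp (θ * Complex.I)) ^ n),
      by exact ((ecirc_continuous j).mul (continuous_const.mul (by fun_prop)))⟩ with hF
  have hFapp : ∀ n θ, F n θ = ecirc j θ * (p n * ((r:ℂ) * Complex.exp (θ * Complex.I)) ^ n) :=
    fun n θ => rfl
  have hb : Summable (fun n =>
      ‖(F n).restrict (⟨Set.uIcc (0:ℝ) (2*Real.pi), isCompact_uIcc⟩ :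
        TopologicalSpace.Compacts ℝ)‖) := by
    refine Summable.of_nonneg_of_le (fun n => norm_nonneg _) (fun n => ?_)
      (summable_aux_s12 g p hsum r hr0.le hr1)
    rw [ContinuousMap.norm_le _ (by positivity)]
    rintro ⟨θ, hθ⟩
    rw [ContinuousMap.restrict_apply]
    rw [show ((F n) θ : ℂ) = ecirc j θ * (p n * ((r:ℂ) * Complex.exp (θ * Complex.I)) ^ n)
      from rfl]
    rw [norm_mul, norm_mul, norm_pow, ecirc_abs, zabs_aux hr0, one_mul]
  have hint := intervalIntegral.hasSum_intervalIntegral_of_summable_norm (a := 0) (b := 2*Real.pi) hb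
  have htsum : ∀ θ:ℝ, (∑' n, F n θ)
      = ecirc j θ * g ((r:ℂ) * Complex.exp (θ * Complex.I)) := fun θ =>
    ((hsum _ (zmem_aux hr0 hr1 θ)).mul_left _).tsum_eq
  have hFn : ∀ n : ℕ, (∫ θ in (0:ℝ)..(2*Real.pi), F n θ)
      = if ((n:ℤ) = -j) then 2*Real.pi*(p n * (r:ℂ)^n) else 0 := by
    intro n
    have hexpn : ∀ θ:ℝ, (Complex.exp ((θ:ℂ) * Complex.I))^n = ecirc (n:ℤ) θ := by
      intro θ
      rw [← Complex.exp_nat_mul]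
      unfold ecirc
      congr 1
      push_cast
      ring
    have hpt : ∀ θ:ℝ, F n θ = (p n * (r:ℂ)^n) * ecirc (j + n) θ := by
      intro θ
      rw [hFapp, mul_pow, hexpn, ← ecirc_mul]
      ring
    rw [intervalIntegral.integral_congr (fun θ _ => hpt θ),
      intervalIntegral.integral_const_mul, ecirc_integral]
    by_cases hc : (n:ℤ) = -j
    · rw [if_pos (by omega), if_pos hc]
      ring
    · rw [if_neg (by omega), if_neg hc, mul_zero]
  have hcollapse : HasSum (fun n : ℕ => if ((n:ℤ) = -j) then 2*Real.pi*(p n * (r:ℂ)^n) else 0)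
      (if j ≤ 0 then 2*Real.pi * (p (-j).toNat * (r:ℂ)^(-j).toNat) else 0) := by
    by_cases hj : j ≤ 0
    · rw [if_pos hj]
      have h1 := hasSum_single (f := fun n : ℕ =>
          if ((n:ℤ) = -j) then 2*Real.pi*(p n * (r:ℂ)^n) else 0)
        ((-j).toNat) (fun b' hb' => if_neg (by omega))
      rw [if_pos (show (((-j).toNat : ℕ) : ℤ) = -j by omega)] at h1
      exact h1
    · rw [if_neg hj]
      have : ∀ n : ℕ, (if ((n:ℤ) = -j) then 2*Real.pi*(p n * (r:ℂ)^n) else 0) = 0 :=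
        fun n => if_neg (by omega)
      simp only [this]
      exact hasSum_zero
  have h2 : HasSum (fun n : ℕ => if ((n:ℤ) = -j) then 2*Real.pi*(p n * (r:ℂ)^n) else 0)
      (∫ θ in (0:ℝ)..(2*Real.pi), ∑' n, F n θ) := by
    rw [← funext hFn]
    exact hint
  rw [← intervalIntegral.integral_congr (fun θ _ => htsum θ)]
  exact h2.unique hcollapse

open Complex Real Filter MeasureTheory in
private lemma Ew_aux (g : ℂ → ℂ) (p : ℕ → ℂ)
    (hp0 : p 0 = 1)
    (hsum : ∀ z ∈ ball (0 : ℂ) 1, HasSum (fun n : ℕ => p n * z ^ n) (g z))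
    {r : ℝ} (hr0 : 0 < r) (hr1 : r < 1) (j : ℤ) :
    (∫ θ in (0:ℝ)..(2*Real.pi),
        ecirc j θ * (((g ((r:ℂ) * Complex.exp (θ * Complex.I))).re : ℝ) : ℂ))
      = if j = 0 then (2*Real.pi : ℂ) else
          if j < 0 then 2*Real.pi * (p (-j).toNat * (r:ℂ)^(-j).toNat / 2)
          else 2*Real.pi * (starRingEnd ℂ) (p j.toNat * (r:ℂ)^j.toNat / 2) := by
  have hgc := contg_aux g p hsum hr0 hr1
  have hcong : ∀ θ:ℝ,
      ecirc j θ * (((g ((r:ℂ) * Complex.exp (θ * Complex.I))).re : ℝ) : ℂ)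
        = (ecirc j θ * g ((r:ℂ) * Complex.exp (θ * Complex.I))
            + (starRingEnd ℂ) (ecirc (-j) θ * g ((r:ℂ) * Complex.exp (θ * Complex.I)))) / 2 := by
    intro θ
    rw [map_mul, ecirc_conj, neg_neg]
    have h := Complex.add_conj (g ((r:ℂ) * Complex.exp (θ * Complex.I)))
    push_cast at h
    linear_combination (-(ecirc j θ) / 2) * h
  rw [intervalIntegral.integral_congr (fun θ _ => hcong θ)]
  have hi1 : IntervalIntegrable
      (fun θ => ecirc j θ * g ((r:ℂ) * Complex.exp (θ * Complex.I)))
      MeasureTheory.volume 0 (2*Real.pi) :=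
    (((ecirc_continuous j).mul hgc)).intervalIntegrable _ _
  have hi2 : IntervalIntegrable
      (fun θ => (starRingEnd ℂ) (ecirc (-j) θ * g ((r:ℂ) * Complex.exp (θ * Complex.I))))
      MeasureTheory.volume 0 (2*Real.pi) :=
    (Complex.continuous_conj.comp ((ecirc_continuous (-j)).mul hgc)).intervalIntegrable _ _
  rw [intervalIntegral.integral_div, intervalIntegral.integral_add hi1 hi2,
    ← conj_intervalIntegral', Ig_aux g p hsum hr0 hr1 j, Ig_aux g p hsum hr0 hr1 (-j)]
  rcases lt_trichotomy j 0 with hj | hj | hj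
  · rw [if_pos hj.le, if_neg (show ¬ -j ≤ 0 by omega),
      if_neg (show ¬ j = 0 by omega), if_pos hj]
    simp only [map_zero, add_zero]
    ring
  · subst hj
    norm_num [hp0]
    rw [show ((starRingEnd ℂ) (2:ℂ)) = 2 from by simp [Complex.ext_iff]]
    ring
  · rw [if_neg (show ¬ j ≤ 0 by omega), if_pos (show -j ≤ 0 by omega),
      if_neg (show ¬ j = 0 by omega), if_neg (show ¬ j < 0 by omega), neg_neg]
    simp only [map_mul, Complex.conj_ofReal, map_div₀, map_ofNat]
    ring

open Complex Real Filter MeasureTheory in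
private lemma key_abstract (c : ℕ → ℂ) (W : ℝ → ℝ)
    (hWpos : ∀ θ, 0 ≤ W θ) (hWc : Continuous W)
    (hEw : ∀ j : ℤ, (∫ θ in (0:ℝ)..(2*Real.pi), ecirc j θ * ((W θ : ℝ) : ℂ))
      = if j = 0 then (2*Real.pi:ℂ) else
          if j < 0 then 2*Real.pi * c (-j).toNat
          else 2*Real.pi * (starRingEnd ℂ) (c j.toNat))
    (k l : ℕ) (hk : 1 ≤ k) (hl : 1 ≤ l) :
    ‖c (k+l) - c k * c l‖ + ‖c k * c l‖ ≤ 1 := by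
  have hπ : 0 < Real.pi := Real.pi_pos
  have hWcc : Continuous fun θ : ℝ => ((W θ : ℝ) : ℂ) := Complex.continuous_ofReal.comp hWc
  have iew : ∀ j : ℤ, IntervalIntegrable (fun θ => ecirc j θ * ((W θ : ℝ) : ℂ))
      MeasureTheory.volume 0 (2*Real.pi) :=
    fun j => ((ecirc_continuous j).mul hWcc).intervalIntegrable _ _
  set V : ℤ → ℂ := fun j => if j = 0 then (2*Real.pi:ℂ) else
      if j < 0 then 2*Real.pi * c (-j).toNat
      else 2*Real.pi * (starRingEnd ℂ) (c j.toNat) with hVdef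
  have hEw' : ∀ j : ℤ, (∫ θ in (0:ℝ)..(2*Real.pi), ecirc j θ * ((W θ : ℝ) : ℂ)) = V j := by
    intro j
    rw [hVdef]
    exact hEw j
  have V0 : V 0 = 2*Real.pi := by rw [hVdef]; norm_num
  have Vneg : ∀ j : ℕ, 1 ≤ j → V (-(j:ℤ)) = 2*Real.pi * c j := by
    intro j hj
    rw [hVdef]
    show (if -(j:ℤ) = 0 then (2*Real.pi:ℂ) else _) = _
    rw [if_neg (show ¬ -(j:ℤ) = 0 by omega), if_pos (show -(j:ℤ) < 0 by omega)]
    norm_num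
  have Vpos : ∀ j : ℕ, 1 ≤ j → V ((j:ℤ)) = 2*Real.pi * (starRingEnd ℂ) (c j) := by
    intro j hj
    rw [hVdef]
    show (if (j:ℤ) = 0 then (2*Real.pi:ℂ) else _) = _
    rw [if_neg (show ¬ (j:ℤ) = 0 by omega), if_neg (show ¬ (j:ℤ) < 0 by omega)]
    norm_num
  -- generic product integral
  have hprod : ∀ (j1 j2 : ℤ) (c1 c2 : ℂ),
      (∫ θ in (0:ℝ)..(2*Real.pi), (ecirc j1 θ - c1) * (ecirc j2 θ - c2) * ((W θ : ℝ) : ℂ))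
        = V (j1+j2) - c2 * V j1 - c1 * V j2 + c1*c2*(2*Real.pi) := by
    intro j1 j2 c1 c2
    have hpt : ∀ θ:ℝ, (ecirc j1 θ - c1) * (ecirc j2 θ - c2) * ((W θ : ℝ) : ℂ)
        = ecirc (j1+j2) θ * ((W θ : ℝ) : ℂ) - c2 * (ecirc j1 θ * ((W θ : ℝ) : ℂ))
          - c1 * (ecirc j2 θ * ((W θ : ℝ) : ℂ)) + (c1*c2) * (ecirc 0 θ * ((W θ : ℝ) : ℂ)) := by
      intro θ
      rw [← ecirc_mul, ecirc_zero]
      ring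
    rw [intervalIntegral.integral_congr (fun θ _ => hpt θ),
      intervalIntegral.integral_add (((iew _).sub ((iew j1).const_mul c2)).sub
        ((iew j2).const_mul c1)) ((iew 0).const_mul (c1*c2)),
      intervalIntegral.integral_sub ((iew _).sub ((iew j1).const_mul c2))
        ((iew j2).const_mul c1),
      intervalIntegral.integral_sub (iew _) ((iew j1).const_mul c2),
      intervalIntegral.integral_const_mul, intervalIntegral.integral_const_mul,
      intervalIntegral.integral_const_mul, hEw', hEw', hEw', hEw', V0]
  -- the four basic quadratic integrals
  have hAval : (∫ θ in (0:ℝ)..(2*Real.pi),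
      (ecirc (-(k:ℤ)) θ - c k) * (ecirc ((k:ℤ)) θ - (starRingEnd ℂ) (c k)) * ((W θ : ℝ) : ℂ))
        = 2*Real.pi * (1 - (Complex.normSq (c k) : ℝ)) := by
    rw [hprod, show (-(k:ℤ) + k) = 0 by ring, V0, Vneg k hk, Vpos k hk]
    have h := Complex.mul_conj (c k)
    linear_combination (-(2*(Real.pi:ℂ))) * h
  have hBval : (∫ θ in (0:ℝ)..(2*Real.pi),
      (ecirc (-(l:ℤ)) θ - c l) * (ecirc ((l:ℤ)) θ - (starRingEnd ℂ) (c l)) * ((W θ : ℝ) : ℂ))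
        = 2*Real.pi * (1 - (Complex.normSq (c l) : ℝ)) := by
    rw [hprod, show (-(l:ℤ) + l) = 0 by ring, V0, Vneg l hl, Vpos l hl]
    have h := Complex.mul_conj (c l)
    linear_combination (-(2*(Real.pi:ℂ))) * h
  have hIval : (∫ θ in (0:ℝ)..(2*Real.pi),
      (ecirc (-(k:ℤ)) θ - c k) * (ecirc (-(l:ℤ)) θ - c l) * ((W θ : ℝ) : ℂ))
        = 2*Real.pi * (c (k+l) - c k * c l) := by
    rw [hprod, show (-(k:ℤ) + -(l:ℤ)) = -((k+l : ℕ):ℤ) by push_cast; ring,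
      Vneg (k+l) (by omega), Vneg k hk, Vneg l hl]
    ring
  have hJval : (∫ θ in (0:ℝ)..(2*Real.pi),
      (ecirc ((k:ℤ)) θ - (starRingEnd ℂ) (c k)) * (ecirc ((l:ℤ)) θ - (starRingEnd ℂ) (c l))
        * ((W θ : ℝ) : ℂ))
        = 2*Real.pi * (starRingEnd ℂ) (c (k+l) - c k * c l) := by
    rw [hprod, show ((k:ℤ) + (l:ℤ)) = (((k+l : ℕ)):ℤ) by push_cast; ring,
      Vpos (k+l) (by omega), Vpos k hk, Vpos l hl]
    simp only [map_sub, map_mul]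
    ring
  -- nonnegativity of the diagonal integrals
  have hAre : (0:ℝ) ≤ ∫ θ in (0:ℝ)..(2*Real.pi), Complex.normSq (ecirc (-(k:ℤ)) θ - c k) * W θ :=
    intervalIntegral.integral_nonneg (by positivity)
      (fun θ _ => mul_nonneg (Complex.normSq_nonneg _) (hWpos θ))
  have hBre : (0:ℝ) ≤ ∫ θ in (0:ℝ)..(2*Real.pi), Complex.normSq (ecirc (-(l:ℤ)) θ - c l) * W θ :=
    intervalIntegral.integral_nonneg (by positivity)
      (fun θ _ => mul_nonneg (Complex.normSq_nonneg _) (hWpos θ))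
  have hAcast : ((∫ θ in (0:ℝ)..(2*Real.pi),
      Complex.normSq (ecirc (-(k:ℤ)) θ - c k) * W θ : ℝ) : ℂ)
      = 2*Real.pi * (1 - (Complex.normSq (c k) : ℝ)) := by
    rw [← intervalIntegral.integral_ofReal, ← hAval]
    apply intervalIntegral.integral_congr
    intro θ _
    show ((Complex.normSq (ecirc (-(k:ℤ)) θ - c k) * W θ : ℝ) : ℂ) = _
    rw [Complex.ofReal_mul, ← Complex.mul_conj, map_sub, ecirc_conj, neg_neg]
  have hBcast : ((∫ θ in (0:ℝ)..(2*Real.pi),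
      Complex.normSq (ecirc (-(l:ℤ)) θ - c l) * W θ : ℝ) : ℂ)
      = 2*Real.pi * (1 - (Complex.normSq (c l) : ℝ)) := by
    rw [← intervalIntegral.integral_ofReal, ← hBval]
    apply intervalIntegral.integral_congr
    intro θ _
    show ((Complex.normSq (ecirc (-(l:ℤ)) θ - c l) * W θ : ℝ) : ℂ) = _
    rw [Complex.ofReal_mul, ← Complex.mul_conj, map_sub, ecirc_conj, neg_neg]
  have hxk : Complex.normSq (c k) ≤ 1 := by
    have h2 : (∫ θ in (0:ℝ)..(2*Real.pi), Complex.normSq (ecirc (-(k:ℤ)) θ - c k) * W θ)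
        = 2*Real.pi * (1 - Complex.normSq (c k)) := by exact_mod_cast hAcast
    nlinarith [hπ, h2 ▸ hAre]
  have hxl : Complex.normSq (c l) ≤ 1 := by
    have h2 : (∫ θ in (0:ℝ)..(2*Real.pi), Complex.normSq (ecirc (-(l:ℤ)) θ - c l) * W θ)
        = 2*Real.pi * (1 - Complex.normSq (c l)) := by exact_mod_cast hBcast
    nlinarith [hπ, h2 ▸ hBre]
  set D : ℂ := c (k+l) - c k * c l with hD
  have hd2 : ‖D‖^2 ≤ (1 - Complex.normSq (c k)) * (1 - Complex.normSq (c l)) := by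
    by_cases hD0 : D = 0
    · rw [hD0]
      simp only [norm_zero, map_zero, ne_eq, OfNat.ofNat_ne_zero, not_false_eq_true, zero_pow]
      exact mul_nonneg (by linarith) (by linarith)
    · set μ : ℂ := D / ((‖D‖ : ℝ) : ℂ) with hμ
      have habsD : (0:ℝ) < ‖D‖ := norm_pos_iff.mpr hD0
      have habsD' : ((‖D‖ : ℝ) : ℂ) ≠ 0 := Complex.ofReal_ne_zero.mpr habsD.ne'
      have hDconj : D * (starRingEnd ℂ) D = ((‖D‖:ℝ):ℂ) * ((‖D‖:ℝ):ℂ) := by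
        rw [Complex.mul_conj, Complex.normSq_eq_norm_sq]
        push_cast
        ring
      have hμ1 : (starRingEnd ℂ) μ * D = ((‖D‖:ℝ):ℂ) := by
        rw [hμ, map_div₀, Complex.conj_ofReal, div_mul_eq_mul_div, div_eq_iff habsD']
        linear_combination hDconj
      have hμ2 : μ * (starRingEnd ℂ) D = ((‖D‖:ℝ):ℂ) := by
        rw [hμ, div_mul_eq_mul_div, div_eq_iff habsD']
        linear_combination hDconj
      have hμ3 : μ * (starRingEnd ℂ) μ = 1 := by
        rw [hμ, map_div₀, Complex.conj_ofReal, div_mul_div_comm,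
          div_eq_iff (mul_ne_zero habsD' habsD')]
        linear_combination hDconj
      have hQ : ∀ t : ℝ, 0 ≤ (1 - Complex.normSq (c k)) * (t*t)
          + (-(2*‖D‖)) * t + (1 - Complex.normSq (c l)) := by
        intro t
        have hpt : ∀ θ:ℝ, ((Complex.normSq ((t:ℂ) * (ecirc (-(k:ℤ)) θ - c k)
              - μ * (starRingEnd ℂ) (ecirc (-(l:ℤ)) θ - c l)) * W θ : ℝ) : ℂ)
            = ((t:ℂ)*(t:ℂ)) * ((ecirc (-(k:ℤ)) θ - c k)
                * (ecirc ((k:ℤ)) θ - (starRingEnd ℂ) (c k)) * ((W θ : ℝ) : ℂ))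
              - ((t:ℂ) * (starRingEnd ℂ) μ) * ((ecirc (-(k:ℤ)) θ - c k)
                * (ecirc (-(l:ℤ)) θ - c l) * ((W θ : ℝ) : ℂ))
              - ((t:ℂ) * μ) * ((ecirc ((k:ℤ)) θ - (starRingEnd ℂ) (c k))
                * (ecirc ((l:ℤ)) θ - (starRingEnd ℂ) (c l)) * ((W θ : ℝ) : ℂ))
              + (μ * (starRingEnd ℂ) μ) * ((ecirc (-(l:ℤ)) θ - c l)
                * (ecirc ((l:ℤ)) θ - (starRingEnd ℂ) (c l)) * ((W θ : ℝ) : ℂ)) := by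
          intro θ
          rw [Complex.ofReal_mul, ← Complex.mul_conj]
          simp only [map_sub, map_mul, Complex.conj_conj, Complex.conj_ofReal, ecirc_conj,
            neg_neg]
          ring
        have h0 : (0:ℝ) ≤ ∫ θ in (0:ℝ)..(2*Real.pi),
            Complex.normSq ((t:ℂ) * (ecirc (-(k:ℤ)) θ - c k)
              - μ * (starRingEnd ℂ) (ecirc (-(l:ℤ)) θ - c l)) * W θ :=
          intervalIntegral.integral_nonneg (by positivity)
            (fun θ _ => mul_nonneg (Complex.normSq_nonneg _) (hWpos θ))
        have hint4 : ∀ (j1 j2 : ℤ) (c1 c2 : ℂ), IntervalIntegrable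
            (fun θ => (ecirc j1 θ - c1)*(ecirc j2 θ - c2)*((W θ:ℝ):ℂ))
            MeasureTheory.volume 0 (2*Real.pi) :=
          fun j1 j2 c1 c2 => ((((ecirc_continuous j1).sub continuous_const).mul
            ((ecirc_continuous j2).sub continuous_const)).mul hWcc).intervalIntegrable _ _
        have hcast : ((∫ θ in (0:ℝ)..(2*Real.pi),
            Complex.normSq ((t:ℂ) * (ecirc (-(k:ℤ)) θ - c k)
              - μ * (starRingEnd ℂ) (ecirc (-(l:ℤ)) θ - c l)) * W θ : ℝ) : ℂ)
            = ((t:ℂ)*(t:ℂ)) * (2*Real.pi * (1 - (Complex.normSq (c k) : ℝ)))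
              - ((t:ℂ) * (starRingEnd ℂ) μ) * (2*Real.pi * (c (k+l) - c k * c l))
              - ((t:ℂ) * μ) * (2*Real.pi * (starRingEnd ℂ) (c (k+l) - c k * c l))
              + (μ * (starRingEnd ℂ) μ) * (2*Real.pi * (1 - (Complex.normSq (c l) : ℝ))) := by
          rw [← intervalIntegral.integral_ofReal,
            intervalIntegral.integral_congr (fun θ _ => hpt θ),
            intervalIntegral.integral_add
              ((((hint4 _ _ _ _).const_mul _).sub ((hint4 _ _ _ _).const_mul _)).sub
                ((hint4 _ _ _ _).const_mul _)) ((hint4 _ _ _ _).const_mul _),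
            intervalIntegral.integral_sub
              (((hint4 _ _ _ _).const_mul _).sub ((hint4 _ _ _ _).const_mul _))
              ((hint4 _ _ _ _).const_mul _),
            intervalIntegral.integral_sub ((hint4 _ _ _ _).const_mul _)
              ((hint4 _ _ _ _).const_mul _),
            intervalIntegral.integral_const_mul, intervalIntegral.integral_const_mul,
            intervalIntegral.integral_const_mul, intervalIntegral.integral_const_mul,
            hAval, hIval, hJval, hBval]
        have hreal : (∫ θ in (0:ℝ)..(2*Real.pi),
            Complex.normSq ((t:ℂ) * (ecirc (-(k:ℤ)) θ - c k)
              - μ * (starRingEnd ℂ) (ecirc (-(l:ℤ)) θ - c l)) * W θ)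
            = 2*Real.pi*((1 - Complex.normSq (c k))*(t*t)
              - 2*‖D‖*t + (1 - Complex.normSq (c l))) := by
          apply Complex.ofReal_inj.mp
          rw [hcast]
          rw [← hD]
          push_cast
          linear_combination (-(2*(Real.pi:ℂ))*(t:ℂ))*hμ1 + (-(2*(Real.pi:ℂ))*(t:ℂ))*hμ2
            + (2*(Real.pi:ℂ)*(1-((Complex.normSq (c l):ℝ):ℂ)))*hμ3
        rw [hreal] at h0
        by_contra hcon
        push_neg at hcon
        nlinarith [mul_pos (by linarith : (0:ℝ) < 2*Real.pi) (by linarith :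
          (0:ℝ) < -((1 - Complex.normSq (c k)) * (t*t)
            + (-(2*‖D‖)) * t + (1 - Complex.normSq (c l))))]
      have hdisc := discrim_le_zero hQ
      rw [discrim] at hdisc
      nlinarith [hdisc]
  have hsq_k := Complex.sq_norm (c k)
  have hsq_l := Complex.sq_norm (c l)
  rw [norm_mul]
  nlinarith [hd2, hxk, hxl, norm_nonneg D, norm_nonneg (c k),
    norm_nonneg (c l), sq_nonneg (‖c k‖ - ‖c l‖),
    sq_nonneg (‖c k‖ + ‖c l‖),
    sq_nonneg (‖D‖ + ‖c k‖ * ‖c l‖ - 1),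
    mul_nonneg (norm_nonneg (c k)) (norm_nonneg (c l))]

open Complex Real Filter MeasureTheory in
private lemma coeff_ineq (g : ℂ → ℂ) (p : ℕ → ℂ)
    (hp0 : p 0 = 1)
    (hsum : ∀ z ∈ ball (0 : ℂ) 1, HasSum (fun n : ℕ => p n * z ^ n) (g z))
    (hre : ∀ z ∈ ball (0 : ℂ) 1, 0 < (g z).re)
    (k l : ℕ) (hk : 1 ≤ k) (hl : 1 ≤ l) :
    ‖p k * p l / 4 - p (k+l) / 2‖ + ‖p k * p l / 4‖ ≤ 1 := by
  have key : ∀ r : ℝ, 0 < r → r < 1 →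
      (‖p k * p l / 4 - p (k+l) / 2‖ + ‖p k * p l / 4‖) * r^(k+l) ≤ 1 := by
    intro r hr0 hr1
    have h := key_abstract (fun n => p n * (r:ℂ)^n / 2)
      (fun θ => (g ((r:ℂ) * Complex.exp (θ * Complex.I))).re)
      (fun θ => (hre _ (zmem_aux hr0 hr1 θ)).le)
      (Complex.continuous_re.comp (contg_aux g p hsum hr0 hr1))
      (fun j => Ew_aux g p hp0 hsum hr0 hr1 j)
      k l hk hl
    have e1 : p (k+l) * (r:ℂ)^(k+l)/2 - (p k * (r:ℂ)^k/2) * (p l * (r:ℂ)^l/2)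
        = (p (k+l)/2 - p k * p l/4) * (((r^(k+l) : ℝ)) : ℂ) := by push_cast; ring
    have e2 : (p k * (r:ℂ)^k/2) * (p l * (r:ℂ)^l/2)
        = (p k * p l/4) * (((r^(k+l) : ℝ)) : ℂ) := by push_cast; ring
    rw [e1, e2, norm_mul, norm_mul, Complex.norm_real, Real.norm_eq_abs,
      abs_of_pos (pow_pos hr0 (k+l))] at h
    rw [norm_sub_rev (p (k+l)/2) (p k * p l/4)] at h
    rw [show ‖p k * p l / 4 - p (k + l) / 2‖
        = ‖p k * p l / 4 - p (k + l) / 2‖ from rfl]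
    linarith [h]
  set T : ℝ := ‖p k * p l / 4 - p (k+l) / 2‖ + ‖p k * p l / 4‖ with hT
  have hne : (nhdsWithin (1:ℝ) (Set.Ioo (0:ℝ) 1)).NeBot := by
    apply mem_closure_iff_nhdsWithin_neBot.mp
    rw [closure_Ioo (by norm_num : (0:ℝ) ≠ 1)]
    exact ⟨by norm_num, le_rfl⟩
  have htend : Tendsto (fun r : ℝ => T * r^(k+l)) (nhdsWithin (1:ℝ) (Set.Ioo (0:ℝ) 1))
      (nhds T) := by
    have hcont : Continuous fun r : ℝ => T * r^(k+l) := by continuity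
    have := (hcont.tendsto 1).mono_left
      (nhdsWithin_le_nhds (s := Set.Ioo (0:ℝ) 1))
    simpa using this
  refine le_of_tendsto htend ?_
  filter_upwards [self_mem_nhdsWithin] with r hr
  exact key r hr.1 hr.2

/-- If `f` is in the closed convex hull of the starlike functions, i.e.
`f(z) = (z/2)(1 + g(z) + z g'(z))` for some `g` in the Carathéodory class `P`
with Taylor coefficients `p`, so that `a n = n p_{n-1} / 2` for `n ≥ 2`, then for
all `m, n ≥ 2`:
`|a_m a_n/(mn) - a_{m+n-1}/(m+n-1)| + |a_m a_n|/(mn) ≤ 1`. -/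
theorem convexHull_starlike_ineq (g : ℂ → ℂ) (p : ℕ → ℂ)
    (hp0 : p 0 = 1)
    (hsum : ∀ z ∈ ball (0 : ℂ) 1, HasSum (fun n : ℕ => p n * z ^ n) (g z))
    (hre : ∀ z ∈ ball (0 : ℂ) 1, 0 < (g z).re)
    (f : ℂ → ℂ)
    (hf : ∀ z ∈ ball (0 : ℂ) 1, f z = z / 2 * (1 + g z + z * deriv g z))
    (a : ℕ → ℂ)
    (ha : ∀ n : ℕ, 2 ≤ n → a n = (n : ℂ) * p (n - 1) / 2)
    (m n : ℕ) (hm : 2 ≤ m) (hn : 2 ≤ n) :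
    ‖a m * a n / ((m * n : ℕ) : ℂ)
        - a (m + n - 1) / ((m + n - 1 : ℕ) : ℂ)‖ +
      ‖a m * a n‖ / ((m * n : ℕ) : ℝ) ≤ 1 := by
  have hm0 : ((m:ℕ):ℂ) ≠ 0 := Nat.cast_ne_zero.mpr (by omega)
  have hn0 : ((n:ℕ):ℂ) ≠ 0 := Nat.cast_ne_zero.mpr (by omega)
  have hmn1 : ((m+n-1 : ℕ):ℂ) ≠ 0 := Nat.cast_ne_zero.mpr (by omega)
  have hstep := coeff_ineq g p hp0 hsum hre (m-1) (n-1) (by omega) (by omega)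
  rw [show (m-1) + (n-1) = m+n-2 from by omega] at hstep
  have e1 : a m * a n / ((m * n : ℕ) : ℂ) = p (m-1) * p (n-1) / 4 := by
    rw [ha m hm, ha n hn]
    push_cast
    field_simp
    ring
  have e2 : a (m+n-1) / ((m + n - 1 : ℕ) : ℂ) = p (m+n-2) / 2 := by
    rw [ha (m+n-1) (by omega), show (m+n-1) - 1 = m+n-2 from by omega,
      div_eq_iff hmn1]
    ring
  have e3 : ‖a m * a n‖ / ((m * n : ℕ) : ℝ)
      = ‖p (m-1) * p (n-1) / 4‖ := by
    rw [← e1, norm_div, Complex.norm_natCast]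
  rw [e1, e2, e3]
  exact hstep
end
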